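/- arXiv:2103.08302 — 18 statements merged into one kernel-verified Lean document; each statement's English description precedes it below -/
import Mathlib

section
/- For any integer C, C ≥ 0 if and only if there exist integers x, y, z such that C = x² + y² + z² + z. -/
open Matrix MeasureTheory

theorem binary_sum_two_squares (N : ℕ) : ∀ α β γ : ℤ, (α + γ).toNat ≤ N → 0 < α →
    α * γ - β ^ 2 = 1 → ∀ x y : ℤ, ∃ u v : ℤ,
    α * x ^ 2 + 2 * β * x * y + γ * y ^ 2 = u ^ 2 + v ^ 2 := by
  induction N with
  | zero =>
    intro α β γ hN hα hdet x y
    exfalso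
    have hγ : 0 < γ := by nlinarith [sq_nonneg β]
    omega
  | succ n ih =>
    intro α β γ hN hα hdet x y
    have hγ : 0 < γ := by nlinarith [sq_nonneg β]
    obtain ⟨B, hB⟩ : ∃ B, |β| = B := ⟨|β|, rfl⟩
    have hB0 : 0 ≤ B := hB ▸ abs_nonneg β
    obtain ⟨s, hss, hsβ⟩ : ∃ s : ℤ, s ^ 2 = 1 ∧ s * β = B := by
      rcases le_or_gt 0 β with h | h
      · exact ⟨1, by norm_num, by rw [← hB, one_mul, abs_of_nonneg h]⟩
      · exact ⟨-1, by norm_num, by rw [← hB, abs_of_neg h]; ring⟩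
    rcases le_or_gt (2 * B) α with h1 | h1
    · rcases le_or_gt (2 * B) γ with h2 | h2
      · -- reduced: α = γ = 1, β = 0
        have hb2 : 4 * β ^ 2 ≤ α * γ := by
          have e1 : 4 * β ^ 2 = (2 * B) * (2 * B) := by rw [← hB, ← sq_abs]; ring
          rw [e1]
          exact mul_le_mul h1 h2 (by positivity) (le_of_lt hα)
        have hα1 : α = 1 := by nlinarith
        have hγ1 : γ = 1 := by nlinarith
        have hβ : β = 0 := by nlinarith
        subst hα1 hγ1 hβ
        exact ⟨x, y, by ring⟩
      · -- 2|β| > γ : reduce α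
        have hdet' : (α - 2 * (s * β) + γ) * γ - (β - s * γ) ^ 2 = 1 := by
          linear_combination hdet - γ ^ 2 * hss
        have hpos : 0 < α - 2 * (s * β) + γ := by nlinarith [sq_nonneg (β - s * γ)]
        have hmeas : ((α - 2 * (s * β) + γ) + γ).toNat ≤ n := by
          rw [hsβ]; omega
        obtain ⟨u, v, huv⟩ := ih _ _ _ hmeas hpos hdet' x (y + s * x)
        refine ⟨u, v, ?_⟩
        linear_combination huv + γ * x ^ 2 * hss
    · -- 2|β| > α : reduce γ
      have hdet' : α * (α - 2 * (s * β) + γ) - (β - s * α) ^ 2 = 1 := by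
        linear_combination hdet - α ^ 2 * hss
      have hpos : 0 < α - 2 * (s * β) + γ := by nlinarith [sq_nonneg (β - s * α)]
      have hmeas : (α + (α - 2 * (s * β) + γ)).toNat ≤ n := by
        rw [hsβ]; omega
      obtain ⟨u, v, huv⟩ := ih _ _ _ hmeas hα hdet' (x + s * y) y
      refine ⟨u, v, ?_⟩
      linear_combination huv + α * y ^ 2 * hss

theorem exists_unimodular_with_col (w : Fin 3 → ℤ)
    (hg : Int.gcd (Int.gcd (w 0) (w 1)) (w 2) = 1) :
    ∃ P : Matrix (Fin 3) (Fin 3) ℤ, P.det = 1 ∧ ∀ i, P i 0 = w i := by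
  by_cases hD : (Int.gcd (w 0) (w 1) : ℤ) = 0
  · have h0 : w 0 = 0 := (Int.gcd_eq_zero_iff.mp (by exact_mod_cast hD)).1
    have h1 : w 1 = 0 := (Int.gcd_eq_zero_iff.mp (by exact_mod_cast hD)).2
    have h2 : w 2 * w 2 = 1 := by
      have hn : (w 2).natAbs = 1 := by
        have : Int.gcd 0 (w 2) = 1 := by rw [← hg, h0, h1]; norm_num
        simpa [Int.gcd] using this
      rcases Int.natAbs_eq_iff.mp hn with h | h <;> rw [h] <;> norm_num
    refine ⟨!![0, 1, 0; 0, 0, w 2; w 2, 0, 0], ?_, ?_⟩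
    · simp [Matrix.det_fin_three]
      linear_combination h2
    · intro i; fin_cases i <;> simp [h0, h1]
  · set D : ℤ := (Int.gcd (w 0) (w 1) : ℤ) with hDdef
    set α : ℤ := Int.gcdA (w 0) (w 1) with hα
    set β : ℤ := Int.gcdB (w 0) (w 1) with hβ
    have hbez1 : D = w 0 * α + w 1 * β := Int.gcd_eq_gcd_ab (w 0) (w 1)
    obtain ⟨a', ha'⟩ : D ∣ w 0 := Int.gcd_dvd_left _ _
    obtain ⟨b', hb'⟩ : D ∣ w 1 := Int.gcd_dvd_right _ _
    have hba : α * a' + β * b' = 1 := by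
      have h : D * (α * a' + β * b') = D * 1 := by
        linear_combination (-α) * ha' + (-β) * hb' - hbez1
      exact mul_left_cancel₀ hD h
    have hg2 : Int.gcd D (w 2) = 1 := by
      rw [hDdef]; exact hg
    set u : ℤ := Int.gcdA D (w 2) with hu
    set v : ℤ := Int.gcdB D (w 2) with hv
    have hbez2 : D * u + w 2 * v = 1 := by
      have h := Int.gcd_eq_gcd_ab D (w 2)
      rw [hg2] at h
      exact_mod_cast h.symm
    refine ⟨!![w 0, -β, -v * a'; w 1, α, -v * b'; w 2, 0, u], ?_, ?_⟩
    · simp [Matrix.det_fin_three]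
      linear_combination (-u) * hbez1 + (v * w 2) * hba + hbez2
    · intro i; fin_cases i <;> simp

open scoped MatrixOrder in
theorem minkowski_val_one (G : Matrix (Fin 3) (Fin 3) ℤ) (hdet : G.det = 1)
    (hpos : ∀ v : Fin 3 → ℤ, v ≠ 0 → 0 < v ⬝ᵥ G.mulVec v)
    (hposR : ((G.map ((↑) : ℤ → ℝ))).PosDef) :
    ∃ w : Fin 3 → ℤ, w ≠ 0 ∧ w ⬝ᵥ G.mulVec w = 1 := by
  classical
  set Gr : Matrix (Fin 3) (Fin 3) ℝ := G.map ((↑) : ℤ → ℝ) with hGr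
  have hdetR : Gr.det = 1 := by
    rw [hGr, show G.map ((↑) : ℤ → ℝ) = (Int.castRingHom ℝ).mapMatrix G from rfl,
      ← RingHom.map_det, hdet]
    norm_num
  have hps : Gr.PosSemidef := hposR.posSemidef
  set S : Matrix (Fin 3) (Fin 3) ℝ := CFC.sqrt Gr with hS
  have hSS : S * S = Gr := CFC.sqrt_mul_sqrt_self Gr (Matrix.nonneg_iff_posSemidef.mpr hps)
  have hSsym : S.transpose = S := by
    have h : star S = S := IsSelfAdjoint.of_nonneg (CFC.sqrt_nonneg Gr)
    rwa [Matrix.star_eq_conjTranspose, Matrix.conjTranspose_eq_transpose_of_trivial] at h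
  have hSdet : S.det * S.det = 1 := by
    rw [← Matrix.det_mul, hSS, hdetR]
  have hSdet0 : S.det ≠ 0 := by
    intro h; rw [h] at hSdet; norm_num at hSdet
  have hQid : ∀ x : Fin 3 → ℝ, (S.mulVec x) ⬝ᵥ (S.mulVec x) = x ⬝ᵥ Gr.mulVec x := by
    intro x
    calc (S.mulVec x) ⬝ᵥ (S.mulVec x) = (Matrix.vecMul x S.transpose) ⬝ᵥ (S.mulVec x) := by
          rw [Matrix.vecMul_transpose]
    _ = (Matrix.vecMul x S) ⬝ᵥ (S.mulVec x) := by rw [hSsym]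
    _ = x ⬝ᵥ (S.mulVec (S.mulVec x)) := (Matrix.dotProduct_mulVec _ _ _).symm
    _ = x ⬝ᵥ ((S * S).mulVec x) := by rw [Matrix.mulVec_mulVec]
    _ = x ⬝ᵥ Gr.mulVec x := by rw [hSS]
  -- ball membership helper
  have hball : ∀ z : EuclideanSpace ℝ (Fin 3),
      z ∈ Metric.ball (0 : EuclideanSpace ℝ (Fin 3)) (Real.sqrt 2) ↔ (∑ i, z i ^ 2) < 2 := by
    intro z
    rw [Metric.mem_ball, dist_zero_right, EuclideanSpace.norm_eq]
    rw [show ∑ i, ‖z i‖ ^ 2 = ∑ i, z i ^ 2 by simp [Real.norm_eq_abs, sq_abs]]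
    exact Real.sqrt_lt_sqrt_iff (by positivity)
  -- the convex body B
  set B : Set (Fin 3 → ℝ) := {y | ∑ i, y i ^ 2 < 2} with hBdef
  have hBpre : (⇑((WithLp.linearEquiv 2 ℝ (Fin 3 → ℝ)).symm)) ⁻¹' Metric.ball 0 (Real.sqrt 2)
      = B := by
    ext y
    rw [Set.mem_preimage, hball]
    simp [hBdef, WithLp.linearEquiv]
  have hBconv : Convex ℝ B := by
    rw [← hBpre]
    exact (convex_ball _ _).linear_preimage (WithLp.linearEquiv 2 ℝ (Fin 3 → ℝ)).symm.toLinearMap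
  have hBmeas : MeasurableSet B := by
    have hc : Continuous (fun y : Fin 3 → ℝ => ∑ i, y i ^ 2) := by continuity
    exact measurableSet_lt hc.measurable measurable_const
  -- volume of B
  have hBvol : volume B = ENNReal.ofReal (8 * Real.sqrt 2 * Real.pi / 3) := by
    have h1 := (EuclideanSpace.volume_preserving_symm_measurableEquiv_toLp (Fin 3)).measure_preimage
      hBmeas.nullMeasurableSet
    have h2 : (⇑(MeasurableEquiv.toLp 2 (Fin 3 → ℝ)).symm) ⁻¹' B
        = Metric.ball (0 : EuclideanSpace ℝ (Fin 3)) (Real.sqrt 2) := by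
      ext z
      rw [Set.mem_preimage, hball]
      simp [hBdef]
    rw [h2] at h1
    rw [← h1, EuclideanSpace.volume_ball]
    have hcard : (Fintype.card (Fin 3)) = 3 := by simp
    rw [hcard]
    have hgamma : Real.Gamma ((3:ℝ) / 2 + 1) = 3 / 4 * Real.sqrt Real.pi := by
      rw [Real.Gamma_add_one (by norm_num)]
      rw [show (3:ℝ)/2 = 1/2 + 1 by norm_num, Real.Gamma_add_one (by norm_num),
        Real.Gamma_one_half_eq]
      ring
    have hpi : Real.sqrt Real.pi ^ 3 = Real.pi * Real.sqrt Real.pi := by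
      have h := Real.sq_sqrt Real.pi_nonneg
      linear_combination Real.sqrt Real.pi * h
    have hsq2 : Real.sqrt 2 ^ 3 = 2 * Real.sqrt 2 := by
      have h := Real.sq_sqrt (by norm_num : (0:ℝ) ≤ 2)
      linear_combination Real.sqrt 2 * h
    have hsqrtpi0 : Real.sqrt Real.pi > 0 := Real.sqrt_pos.mpr Real.pi_pos
    rw [show ((3:ℕ):ℝ) = (3:ℝ) by norm_num]
    rw [← ENNReal.ofReal_pow (Real.sqrt_nonneg 2), ← ENNReal.ofReal_mul (by positivity)]
    congr 1
    rw [hsq2, hpi, hgamma]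
    field_simp
    ring
  -- the ellipsoid s
  set T := Matrix.toLin' S with hT
  have hTdet : LinearMap.det T ≠ 0 := by
    rw [hT, LinearMap.det_toLin']
    exact hSdet0
  set s : Set (Fin 3 → ℝ) := ⇑T ⁻¹' B with hsdef
  have hsconv : Convex ℝ s := hBconv.linear_preimage T
  have hssymm : ∀ x ∈ s, -x ∈ s := by
    intro x hx
    simp only [hsdef, Set.mem_preimage, map_neg, hBdef, Set.mem_setOf_eq] at hx ⊢
    simpa [Pi.neg_apply, neg_sq] using hx
  have hsvol : volume s = ENNReal.ofReal (8 * Real.sqrt 2 * Real.pi / 3) := by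
    rw [hsdef, Measure.addHaar_preimage_linearMap volume hTdet, hBvol]
    have habs : |(LinearMap.det T)⁻¹| = 1 := by
      rw [hT, LinearMap.det_toLin']
      rcases mul_self_eq_one_iff.mp hSdet with h | h <;> rw [h] <;> norm_num
    rw [habs]
    simp
  -- the lattice
  set bZ := Pi.basisFun ℝ (Fin 3) with hbZ
  set L : AddSubgroup (Fin 3 → ℝ) := (Submodule.span ℤ (Set.range ⇑bZ)).toAddSubgroup with hL
  have fund := ZSpan.isAddFundamentalDomain' bZ volume
  have hFvol : volume (ZSpan.fundamentalDomain bZ) = 1 := by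
    rw [ZSpan.volume_fundamentalDomain]
    have : (Matrix.of ⇑bZ) = (1 : Matrix (Fin 3) (Fin 3) ℝ) := by
      ext i j
      simp [hbZ, Pi.basisFun_apply, Matrix.one_apply, Pi.single_apply, eq_comm]
    rw [this]
    simp
  -- Minkowski
  have hlt : volume (ZSpan.fundamentalDomain bZ) * 2 ^ (Module.finrank ℝ (Fin 3 → ℝ))
      < volume s := by
    rw [hFvol, hsvol, one_mul]
    have hfr : Module.finrank ℝ (Fin 3 → ℝ) = 3 := by simp
    rw [hfr]
    rw [show ((2:ENNReal) ^ 3) = ENNReal.ofReal 8 by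
      rw [show ENNReal.ofReal (8:ℝ) = ((8:ℕ):ENNReal) by
        rw [show (8:ℝ) = ((8:ℕ):ℝ) by norm_num, ENNReal.ofReal_natCast]]
      norm_num]
    rw [ENNReal.ofReal_lt_ofReal_iff (by positivity)]
    have h2 : Real.sqrt 2 ^ 2 = 2 := Real.sq_sqrt (by norm_num)
    nlinarith [Real.pi_gt_three, Real.sqrt_nonneg 2, sq_nonneg (Real.sqrt 2 - 1)]
  haveI : Countable ↥L := inferInstanceAs (Countable (Submodule.span ℤ (Set.range ⇑bZ)))
  obtain ⟨x, hx0, hxs⟩ :=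
    exists_ne_zero_mem_lattice_of_measure_mul_two_pow_lt_measure (L := L)
      fund hssymm hsconv hlt
  -- extract integer vector
  have hxspan : (↑x : Fin 3 → ℝ) ∈ Submodule.span ℤ (Set.range ⇑bZ) := x.2
  obtain ⟨c, hc⟩ := (Submodule.mem_span_range_iff_exists_fun ℤ).mp hxspan
  have hcx : ∀ j, (↑x : Fin 3 → ℝ) j = ((c j : ℤ) : ℝ) := by
    intro j
    rw [← hc]
    simp [hbZ, Pi.basisFun_apply, Fin.sum_univ_three, Pi.single_apply]
  refine ⟨c, ?_, ?_⟩
  · intro hc0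
    apply hx0
    have : (↑x : Fin 3 → ℝ) = 0 := by
      funext j
      rw [hcx j, hc0]
      simp
    exact Subtype.ext this
  · have hmem : (↑x : Fin 3 → ℝ) ∈ s := hxs
    rw [hsdef, Set.mem_preimage] at hmem
    have hq : (↑x : Fin 3 → ℝ) ⬝ᵥ Gr.mulVec (↑x : Fin 3 → ℝ) < 2 := by
      rw [← hQid]
      have : T (↑x : Fin 3 → ℝ) = S.mulVec (↑x : Fin 3 → ℝ) := by
        rw [hT, Matrix.toLin'_apply]
      rw [this] at hmem
      simp only [hBdef, Set.mem_setOf_eq] at hmem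
      calc (S.mulVec ↑x) ⬝ᵥ (S.mulVec ↑x) = ∑ i, (S.mulVec ↑x) i ^ 2 := by
            simp [dotProduct, Fin.sum_univ_three]; ring
      _ < 2 := hmem
    have hcast : ((c ⬝ᵥ G.mulVec c : ℤ) : ℝ) = (↑x : Fin 3 → ℝ) ⬝ᵥ Gr.mulVec (↑x : Fin 3 → ℝ) := by
      simp only [dotProduct, Matrix.mulVec, Fin.sum_univ_three, hGr, Matrix.map_apply, hcx]
      push_cast
      ring
    have hc0 : c ≠ 0 := by
      intro h
      apply hx0
      apply Subtype.ext
      funext j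
      rw [hcx j, h]
      simp
    have hpos' := hpos c hc0
    have hlt2 : c ⬝ᵥ G.mulVec c < 2 := by
      have := hcast ▸ hq
      exact_mod_cast this
    omega

open Matrix in
theorem ternary_rep (G : Matrix (Fin 3) (Fin 3) ℤ)
    (hsym : G.transpose = G) (hdet : G.det = 1)
    (hpos : ∀ v : Fin 3 → ℤ, v ≠ 0 → 0 < v ⬝ᵥ G.mulVec v)
    (hmink : ∃ w : Fin 3 → ℤ, w ≠ 0 ∧ w ⬝ᵥ G.mulVec w = 1) :
    ∃ x y z : ℤ, G 0 0 = x ^ 2 + y ^ 2 + z ^ 2 := by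
  obtain ⟨w, hw0, hw1⟩ := hmink
  -- gcd of w is 1
  have hgcd : Int.gcd (Int.gcd (w 0) (w 1)) (w 2) = 1 := by
    set g : ℕ := Int.gcd (Int.gcd (w 0) (w 1)) (w 2) with hg
    have hd0 : (g : ℤ) ∣ w 0 := dvd_trans (Int.gcd_dvd_left _ _) (Int.gcd_dvd_left _ _)
    have hd1 : (g : ℤ) ∣ w 1 := dvd_trans (Int.gcd_dvd_left _ _) (Int.gcd_dvd_right _ _)
    have hd2 : (g : ℤ) ∣ w 2 := Int.gcd_dvd_right _ _
    obtain ⟨a0, h0⟩ := hd0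
    obtain ⟨a1, h1⟩ := hd1
    obtain ⟨a2, h2⟩ := hd2
    have hsq : ((g : ℤ) * g) ∣ 1 := by
      rw [← hw1]
      refine ⟨a0 * (G 0 0 * a0 + G 0 1 * a1 + G 0 2 * a2) +
        a1 * (G 1 0 * a0 + G 1 1 * a1 + G 1 2 * a2) +
        a2 * (G 2 0 * a0 + G 2 1 * a1 + G 2 2 * a2), ?_⟩
      simp [dotProduct, Matrix.mulVec, Fin.sum_univ_three, h0, h1, h2]
      ring
    have := Int.le_of_dvd one_pos hsq
    have hg0 : 0 < (g:ℤ) * g := by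
      rcases Nat.eq_zero_or_pos g with h | h
      · exfalso
        rw [h] at h0 h1 h2
        apply hw0
        funext i
        fin_cases i <;> simp_all
      · positivity
    nlinarith [hg0, this]
  obtain ⟨P, hPdet, hPcol⟩ := exists_unimodular_with_col w hgcd
  set A : Matrix (Fin 3) (Fin 3) ℤ := P.transpose * G * P with hA
  have hAsym : A.transpose = A := by
    rw [hA, Matrix.transpose_mul, Matrix.transpose_mul, Matrix.transpose_transpose, hsym,
      Matrix.mul_assoc]
  have hAdet : A.det = 1 := by
    rw [hA, Matrix.det_mul, Matrix.det_mul, Matrix.det_transpose, hPdet, hdet]; ring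
  -- Q_A(x) = Q_G(Px)
  have hQA : ∀ x : Fin 3 → ℤ, x ⬝ᵥ A.mulVec x = (P.mulVec x) ⬝ᵥ G.mulVec (P.mulVec x) := by
    intro x
    rw [hA, Matrix.mul_assoc, ← Matrix.mulVec_mulVec, ← Matrix.mulVec_mulVec,
      Matrix.dotProduct_mulVec, Matrix.vecMul_transpose]
  have hApos : ∀ x : Fin 3 → ℤ, x ≠ 0 → 0 < x ⬝ᵥ A.mulVec x := by
    intro x hx
    rw [hQA]
    apply hpos
    intro hPx
    apply hx
    have : (P.adjugate).mulVec (P.mulVec x) = x := by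
      rw [Matrix.mulVec_mulVec, Matrix.adjugate_mul, hPdet]
      simp
    rw [hPx] at this
    simp at this
    exact this.symm
  have hA00 : A 0 0 = 1 := by
    have : A 0 0 = w ⬝ᵥ G.mulVec w := by
      rw [hA]
      simp [Matrix.mul_apply, dotProduct, Matrix.mulVec, Fin.sum_univ_three, Matrix.transpose_apply,
        hPcol]
      ring
    rw [this, hw1]
  -- coordinates of e0
  set c : Fin 3 → ℤ := (P.adjugate).mulVec (fun i => if i = 0 then 1 else 0) with hc
  have hPc : P.mulVec c = (fun i => if i = 0 then 1 else 0) := by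
    rw [hc, Matrix.mulVec_mulVec, Matrix.mul_adjugate, hPdet]
    simp
  have hm : G 0 0 = c ⬝ᵥ A.mulVec c := by
    rw [hQA, hPc]
    simp [dotProduct, Matrix.mulVec, Fin.sum_univ_three]
  -- symmetric entries
  have e10 : A 1 0 = A 0 1 := by
    have h := congrFun (congrFun hAsym 0) 1; simpa using h
  have e20 : A 2 0 = A 0 2 := by
    have h := congrFun (congrFun hAsym 0) 2; simpa using h
  have e21 : A 2 1 = A 1 2 := by
    have h := congrFun (congrFun hAsym 1) 2; simpa using h
  -- binary form
  set α : ℤ := A 1 1 - A 0 1 ^ 2 with hα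
  set β : ℤ := A 1 2 - A 0 1 * A 0 2 with hβ
  set γ : ℤ := A 2 2 - A 0 2 ^ 2 with hγ
  have hbdet : α * γ - β ^ 2 = 1 := by
    rw [hα, hβ, hγ]
    have hd3 := Matrix.det_fin_three A
    rw [hAdet] at hd3
    rw [hA00, e10, e20, e21] at hd3
    linear_combination -hd3
  have hαpos : 0 < α := by
    have := hApos (fun i => if i = 0 then -(A 0 1) else if i = 1 then 1 else 0) (by
      intro h
      have := congrFun h 1
      simp at this)
    calc 0 < _ := this
    _ = α := by
      simp [dotProduct, Matrix.mulVec, Fin.sum_univ_three, hα, hA00, e10]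
      ring
  obtain ⟨u, v, huv⟩ := binary_sum_two_squares (α + γ).toNat α β γ le_rfl hαpos hbdet (c 1) (c 2)
  refine ⟨c 0 + A 0 1 * c 1 + A 0 2 * c 2, u, v, ?_⟩
  rw [hm, hα, hβ, hγ] at *
  simp only [dotProduct, Matrix.mulVec, Fin.sum_univ_three]
  linear_combination huv + c 0 ^ 2 * hA00 + (c 0 * c 1) * e10 + (c 0 * c 2) * e20 +
    (c 1 * c 2) * e21

theorem quad_pos_aux {R : Type*} [CommRing R] [LinearOrder R] [IsStrictOrderedRing R] (M P Q A B C : R)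
    (hM : 0 < M) (hP : 0 < P) (heq : M * P * Q = P * A ^ 2 + B ^ 2 + M * C ^ 2)
    (hstrict : A ≠ 0 ∨ B ≠ 0 ∨ C ≠ 0) : 0 < Q := by
  have hA : 0 ≤ P * A ^ 2 := by positivity
  have hB : 0 ≤ B ^ 2 := sq_nonneg _
  have hC : 0 ≤ M * C ^ 2 := by positivity
  have hQpos : 0 < M * P * Q := by
    rcases hstrict with h | h | h
    · have h1 : 0 < A ^ 2 := lt_of_le_of_ne (sq_nonneg _) (Ne.symm (pow_ne_zero 2 h))
      have h2 : 0 < P * A ^ 2 := mul_pos hP h1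
      linarith [heq]
    · have h1 : 0 < B ^ 2 := lt_of_le_of_ne (sq_nonneg _) (Ne.symm (pow_ne_zero 2 h))
      linarith [heq]
    · have h1 : 0 < C ^ 2 := lt_of_le_of_ne (sq_nonneg _) (Ne.symm (pow_ne_zero 2 h))
      have h2 : 0 < M * C ^ 2 := mul_pos hM h1
      linarith [heq]
  nlinarith [hQpos, mul_pos hM hP]

theorem sum_three_squares (n : ℕ) (hn : 1 ≤ n) :
    ∃ x y z : ℤ, (4 * (n : ℤ) + 1) = x ^ 2 + y ^ 2 + z ^ 2 := by
  classical
  obtain ⟨m, hm⟩ : ∃ m : ℕ, m = 4 * n + 1 := ⟨_, rfl⟩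
  have hm5 : 5 ≤ m := by omega
  have hm4 : m % 4 = 1 := by omega
  haveI : NeZero (4 * m) := ⟨by omega⟩
  have hcop : Nat.Coprime (2 * m - 1) (4 * m) := by
    have d1 : Nat.gcd (2 * m - 1) (4 * m) ∣ 2 * (2 * m - 1) :=
      Dvd.dvd.mul_left (Nat.gcd_dvd_left _ _) 2
    have d2 : Nat.gcd (2 * m - 1) (4 * m) ∣ 4 * m := Nat.gcd_dvd_right _ _
    have d3 : Nat.gcd (2 * m - 1) (4 * m) ∣ 4 * m - 2 * (2 * m - 1) := Nat.dvd_sub d2 d1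
    rw [show 4 * m - 2 * (2 * m - 1) = 2 by omega] at d3
    rcases (Nat.dvd_prime Nat.prime_two).mp d3 with h | h
    · exact h
    · exfalso
      have := Nat.gcd_dvd_left (2 * m - 1) (4 * m)
      rw [h] at this
      omega
  have ha : IsUnit ((2 * m - 1 : ℕ) : ZMod (4 * m)) :=
    (ZMod.isUnit_iff_coprime _ _).mpr hcop
  obtain ⟨p, hpgt, hpprime, hpmod⟩ := Nat.forall_exists_prime_gt_and_eq_mod ha (4 * m)
  haveI : Fact p.Prime := ⟨hpprime⟩
  have hmodeq : p ≡ 2 * m - 1 [MOD 4 * m] := (ZMod.natCast_eq_natCast_iff _ _ _).mp hpmod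
  have hp4 : p % 4 = 1 := by
    have h4 : p ≡ 2 * m - 1 [MOD 4] := hmodeq.of_dvd ⟨m, rfl⟩
    have h5 : (2 * m - 1) % 4 = 1 := by omega
    unfold Nat.ModEq at h4
    omega
  have hpm1 : m ∣ p + 1 := by
    have hmm : p ≡ 2 * m - 1 [MOD m] := hmodeq.of_dvd ⟨4, by ring⟩
    have h1 : p + 1 ≡ 2 * m [MOD m] := by
      have h := hmm.add_right 1
      rwa [show 2 * m - 1 + 1 = 2 * m by omega] at h
    have h2 : 2 * m ≡ 0 [MOD m] := Nat.modEq_zero_iff_dvd.mpr ⟨2, by ring⟩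
    exact Nat.modEq_zero_iff_dvd.mp (h1.trans h2)
  have hp2 : p ≠ 2 := by omega
  have hpodd : Odd p := by
    rcases Nat.Prime.eq_two_or_odd hpprime with h | h
    · omega
    · exact Nat.odd_iff.mpr h
  have hpm : ¬ (p ∣ m) := fun h => by
    have := Nat.le_of_dvd (by omega) h
    omega
  have hmzmod : ((m : ℤ) : ZMod p) ≠ 0 := by
    rw [Ne, ZMod.intCast_zmod_eq_zero_iff_dvd]
    intro h
    exact hpm (by exact_mod_cast h)
  have hdvdp1 : (m : ℤ) ∣ (p : ℤ) + 1 := by exact_mod_cast hpm1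
  have hlegm : legendreSym p (m : ℤ) = 1 := by
    rw [jacobiSym.legendreSym.to_jacobiSym]
    rw [jacobiSym.quadratic_reciprocity_one_mod_four hm4 hpodd]
    have hmodint : (p : ℤ) % (m : ℤ) = (-1) % (m : ℤ) := by
      have : (p : ℤ) ≡ -1 [ZMOD (m : ℤ)] := by
        rw [Int.modEq_iff_dvd]
        obtain ⟨k, hk⟩ := hdvdp1
        exact ⟨-k, by linarith⟩
      exact this
    rw [jacobiSym.mod_left' hmodint]
    have hoddm : Odd m := by rw [Nat.odd_iff]; omega
    rw [jacobiSym.at_neg_one hoddm, ZMod.χ₄_nat_one_mod_four hm4]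
  have hlegneg : legendreSym p (-(m : ℤ)) = 1 := by
    rw [show (-(m : ℤ)) = (-1) * m by ring, legendreSym.mul, legendreSym.at_neg_one hp2,
      ZMod.χ₄_nat_one_mod_four hp4, hlegm]
    norm_num
  have hsq : IsSquare ((-(m : ℤ) : ℤ) : ZMod p) := by
    apply (legendreSym.eq_one_iff p ?_).mp hlegneg
    rw [Int.cast_neg]
    exact fun h => hmzmod (neg_eq_zero.mp h)
  obtain ⟨r, hr⟩ := hsq
  have hr2 : r * r = -(((m : ℕ) : ZMod p)) := by
    rw [← hr]; push_cast; ring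
  obtain ⟨F, hF⟩ : ∃ F : ZMod p, F = r * (((m : ℕ) : ZMod p))⁻¹ := ⟨_, rfl⟩
  have hmun : ((m : ℕ) : ZMod p) ≠ 0 := by
    intro h
    apply hmzmod
    rw [show ((m : ℤ) : ZMod p) = (((m : ℕ) : ℤ) : ZMod p) by norm_num]
    push_cast
    exact h
  have hmF : ((m : ℕ) : ZMod p) * F ^ 2 = -1 := by
    rw [hF]
    field_simp
    linear_combination hr2
  obtain ⟨f, hf⟩ : ∃ f : ℤ, f = (F.val : ℤ) := ⟨_, rfl⟩
  have hpf : (p : ℤ) ∣ (m : ℤ) * f ^ 2 + 1 := by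
    rw [← ZMod.intCast_zmod_eq_zero_iff_dvd]
    rw [hf]
    push_cast
    rw [ZMod.natCast_val, ZMod.cast_id]
    linear_combination hmF
  obtain ⟨k, hk⟩ := hpf
  obtain ⟨e, he⟩ := hpm1
  -- over ℤ
  have hme : (m : ℤ) * e = (p : ℤ) + 1 := by exact_mod_cast he.symm
  have hpk : (m : ℤ) * f ^ 2 + 1 = (p : ℤ) * k := hk
  have hm0 : (0 : ℤ) < m := by exact_mod_cast Nat.pos_of_ne_zero (by omega)
  have hp0 : (0 : ℤ) < p := by exact_mod_cast hpprime.pos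
  obtain ⟨G, hG⟩ : ∃ G : Matrix (Fin 3) (Fin 3) ℤ, G = !![(m : ℤ), 1, 0; 1, (e : ℤ), f; 0, f, k] := ⟨_, rfl⟩
  have hsym : G.transpose = G := by
    rw [hG]
    apply Matrix.ext
    intro i j
    fin_cases i <;> fin_cases j <;> simp [Matrix.transpose_apply]
  have hdet : G.det = 1 := by
    rw [hG]
    simp [Matrix.det_fin_three]
    linear_combination k * hme - hpk
  -- key positivity identity
  have hkey : ∀ x0 x1 x2 : ℤ, (m : ℤ) * p * ((m * x0 ^ 2 + 2 * x0 * x1 + e * x1 ^ 2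
      + 2 * f * x1 * x2 + k * x2 ^ 2)) =
      p * (m * x0 + x1) ^ 2 + (p * x1 + f * m * x2) ^ 2 + m * x2 ^ 2 := by
    intro x0 x1 x2
    linear_combination (p * x1 ^ 2) * hme - (m * x2 ^ 2) * hpk
  -- real versions
  have hmeR : (m : ℝ) * (e : ℝ) = (p : ℝ) + 1 := by exact_mod_cast hme
  have hpkR : (m : ℝ) * (f : ℝ) ^ 2 + 1 = (p : ℝ) * (k : ℝ) := by exact_mod_cast hpk
  have hm0R : (0 : ℝ) < m := by exact_mod_cast hm0
  have hp0R : (0 : ℝ) < p := by exact_mod_cast hp0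
  have hkeyR : ∀ x0 x1 x2 : ℝ, (m : ℝ) * p * ((m * x0 ^ 2 + 2 * x0 * x1 + e * x1 ^ 2
      + 2 * f * x1 * x2 + k * x2 ^ 2)) =
      p * (m * x0 + x1) ^ 2 + (p * x1 + f * m * x2) ^ 2 + m * x2 ^ 2 := by
    intro x0 x1 x2
    linear_combination ((p : ℝ) * x1 ^ 2) * hmeR - ((m : ℝ) * x2 ^ 2) * hpkR
  -- integer positivity
  have hpos : ∀ v : Fin 3 → ℤ, v ≠ 0 → 0 < v ⬝ᵥ G.mulVec v := by
    intro v hv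
    have hQ : v ⬝ᵥ G.mulVec v = m * (v 0) ^ 2 + 2 * (v 0) * (v 1) + e * (v 1) ^ 2
        + 2 * f * (v 1) * (v 2) + k * (v 2) ^ 2 := by
      rw [hG]
      simp [dotProduct, Matrix.mulVec, Fin.sum_univ_three]
      ring
    rw [hQ]
    apply quad_pos_aux (m : ℤ) (p : ℤ) _ ((m : ℤ) * v 0 + v 1) ((p : ℤ) * v 1 + f * m * v 2)
      (v 2) hm0 hp0 (hkey (v 0) (v 1) (v 2))
    by_cases h2 : v 2 = 0
    · by_cases h1 : v 1 = 0
      · have h0 : v 0 ≠ 0 := by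
          intro h0
          exact hv (funext fun i => by fin_cases i <;> simp [h0, h1, h2])
        left
        rw [h1, add_zero]
        exact mul_ne_zero (by omega) h0
      · right; left
        rw [h2, mul_zero, add_zero]
        exact mul_ne_zero (by omega) h1
    · right; right; exact h2
  have hsym' : ∀ i j, G j i = G i j := fun i j => by
    have h := congrFun (congrFun hsym i) j
    simpa using h
  have hposR : ((G.map ((↑) : ℤ → ℝ))).PosDef := by
    rw [Matrix.posDef_iff_dotProduct_mulVec]
    constructor
    · show (G.map ((↑) : ℤ → ℝ)).conjTranspose = _
      apply Matrix.ext
      intro i j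
      simp [Matrix.conjTranspose_apply, Matrix.map_apply, hsym' i j]
    · intro x hx
      have hsx : star x = x := by
        funext i
        simp
      rw [hsx]
      have hQ : x ⬝ᵥ (G.map ((↑) : ℤ → ℝ)).mulVec x = (m : ℝ) * (x 0) ^ 2
          + 2 * (x 0) * (x 1) + e * (x 1) ^ 2 + 2 * f * (x 1) * (x 2) + k * (x 2) ^ 2 := by
        rw [hG]
        simp [dotProduct, Matrix.mulVec, Fin.sum_univ_three, Matrix.map_apply]
        ring
      rw [hQ]
      apply quad_pos_aux (m : ℝ) (p : ℝ) _ ((m : ℝ) * x 0 + x 1)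
        ((p : ℝ) * x 1 + (f : ℝ) * m * x 2) (x 2) hm0R hp0R (hkeyR (x 0) (x 1) (x 2))
      by_cases h2 : x 2 = 0
      · by_cases h1 : x 1 = 0
        · have h0 : x 0 ≠ 0 := by
            intro h0
            exact hx (funext fun i => by fin_cases i <;> simp [h0, h1, h2])
          left
          rw [h1, add_zero]
          exact mul_ne_zero (by positivity) h0
        · right; left
          rw [h2, mul_zero, add_zero]
          exact mul_ne_zero (by positivity) h1
      · right; right; exact h2
  have hmink := minkowski_val_one G hdet hpos hposR
  obtain ⟨x, y, z, hxyz⟩ := ternary_rep G hsym hdet hpos hmink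
  refine ⟨x, y, z, ?_⟩
  have hG00 : G 0 0 = (m : ℤ) := by rw [hG]; simp
  rw [hG00] at hxyz
  rw [← hxyz, hm]
  push_cast
  ring


theorem three_squares_plus_z (C : ℤ) :
    C ≥ 0 ↔ ∃ x y z : ℤ, C = x^2 + y^2 + z^2 + z := by
  constructor
  · intro hC
    by_cases hC0 : C = 0
    · exact ⟨0, 0, 0, by rw [hC0]; ring⟩
    · have hC1 : 1 ≤ C := by omega
      obtain ⟨n, hn⟩ : ∃ n : ℕ, C = (n : ℤ) := ⟨C.toNat, (Int.toNat_of_nonneg hC).symm⟩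
      have hn1 : 1 ≤ n := by omega
      obtain ⟨x, y, z, h⟩ := sum_three_squares n hn1
      obtain ⟨a, ha⟩ := Int.even_or_odd' x
      obtain ⟨b, hb⟩ := Int.even_or_odd' y
      obtain ⟨c, hc⟩ := Int.even_or_odd' z
      subst hn
      rcases ha with ha | ha <;> rcases hb with hb | hb <;> rcases hc with hc | hc <;>
        rw [ha, hb, hc] at h
      · -- all even : contradiction
        exfalso
        have h' : 4 * (n : ℤ) + 1 = 4 * (a^2 + b^2 + c^2) + 0 := by linear_combination h
        omega
      · -- z odd
        refine ⟨a, b, c, ?_⟩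
        have h' : 4 * ((n : ℤ) - (a^2 + b^2 + c^2 + c)) = 0 := by linear_combination h
        linarith
      · -- y odd
        refine ⟨a, c, b, ?_⟩
        have h' : 4 * ((n : ℤ) - (a^2 + c^2 + b^2 + b)) = 0 := by linear_combination h
        linarith
      · -- y z odd
        exfalso
        have h' : 4 * (n : ℤ) + 1 = 4 * (a^2 + b^2 + b + c^2 + c) + 2 := by linear_combination h
        omega
      · -- x odd
        refine ⟨b, c, a, ?_⟩
        have h' : 4 * ((n : ℤ) - (b^2 + c^2 + a^2 + a)) = 0 := by linear_combination h
        linarith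
      · -- x z odd
        exfalso
        have h' : 4 * (n : ℤ) + 1 = 4 * (a^2 + a + b^2 + c^2 + c) + 2 := by linear_combination h
        omega
      · -- x y odd
        exfalso
        have h' : 4 * (n : ℤ) + 1 = 4 * (a^2 + a + b^2 + b + c^2) + 2 := by linear_combination h
        omega
      · -- all odd
        exfalso
        have h' : 4 * (n : ℤ) + 1 = 4 * (a^2 + a + b^2 + b + c^2 + c) + 3 := by
          linear_combination h
        omega
  · rintro ⟨x, y, z, rfl⟩
    nlinarith [sq_nonneg x, sq_nonneg y, sq_nonneg (2*z+1)]
end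

section
/- For any integer C, C ≠ 0 if and only if there exist integers u, v such that C = (2u+1)(3v+1). -/
lemma aux_form : ∀ n : ℕ, ∀ C : ℤ, C.natAbs = n → C ≠ 0 →
    ∃ u v : ℤ, C = (2*u + 1) * (3*v + 1) := by
  intro n
  induction n using Nat.strong_induction_on with
  | _ n ih =>
    intro C hn hC
    rcases (by omega : C % 3 = 0 ∨ C % 3 = 1 ∨ C % 3 = 2) with h | h | h
    · -- 3 ∣ C
      obtain ⟨D, hD⟩ : (3:ℤ) ∣ C := Int.dvd_of_emod_eq_zero h
      have hD0 : D ≠ 0 := by rintro rfl; simp at hD; exact hC hD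
      have hlt : D.natAbs < n := by
        subst hn hD
        have : D.natAbs < 3 * D.natAbs := by
          have := Int.natAbs_pos.mpr hD0; omega
        simpa [Int.natAbs_mul] using this
      obtain ⟨u, v, huv⟩ := ih D.natAbs hlt D rfl hD0
      exact ⟨3*u + 1, v, by rw [hD, huv]; ring⟩
    · exact ⟨0, (C - 1) / 3, by omega⟩
    · exact ⟨-1, (-C - 1) / 3, by omega⟩

theorem nonzero_iff_form (C : ℤ) :
    C ≠ 0 ↔ ∃ u v : ℤ, C = (2*u + 1) * (3*v + 1) := by
  constructor
  · exact fun h => aux_form C.natAbs C rfl h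
  · rintro ⟨u, v, rfl⟩ h
    rcases mul_eq_zero.mp h with h1 | h1 <;> omega
end

section
/- For any integer C, C ≥ 0 if and only if there exists a nonzero integer x such that (4C+2)x² + 1 is a perfect square (a square of some integer). -/
theorem nonneg_iff_pell (C : ℤ) :
    C ≥ 0 ↔ ∃ x : ℤ, x ≠ 0 ∧ ∃ m : ℤ, (4*C + 2) * x^2 + 1 = m^2 := by
  constructor
  · intro hC
    have h₀ : (0 : ℤ) < 4*C + 2 := by linarith
    have hns : ¬ IsSquare (4*C + 2 : ℤ) := by
      rintro ⟨r, hr⟩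
      have : IsSquare ((4*C + 2 : ℤ) : ZMod 4) := ⟨(r : ZMod 4), by exact_mod_cast congrArg (Int.cast : ℤ → ZMod 4) hr⟩
      have h2 : ((4*C + 2 : ℤ) : ZMod 4) = 2 := by
        have h4 : (4 : ZMod 4) = 0 := by decide
        push_cast
        rw [h4]; ring
      rw [h2] at this
      revert this; decide
    obtain ⟨y, x, h, hx⟩ := Pell.exists_of_not_isSquare h₀ hns
    exact ⟨x, hx, y, by linarith⟩
  · rintro ⟨x, hx, m, hm⟩
    by_contra hC
    push_neg at hC
    have hx2 : (1 : ℤ) ≤ x^2 := by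
      have h1 : x^2 ≠ 0 := pow_ne_zero 2 hx
      have h2 := sq_nonneg x
      omega
    have hm2 : (0 : ℤ) ≤ m^2 := sq_nonneg m
    have hle : (4*C + 2) * x^2 ≤ (4*C + 2) * 1 := by
      apply mul_le_mul_of_nonpos_left hx2; linarith
    have : m^2 = 0 := by nlinarith
    have hm0 : m = 0 := by nlinarith [sq_nonneg m]
    rw [hm0] at hm
    have : (4*C + 2) * x^2 = -1 := by linarith
    omega
end

section
/- Let C₁, …, Cₙ be integers and D₁, …, Dₙ positive integers with |Cᵢ| ≤ Dᵢ for all i. Then (C₁ ≥ 0 ∧ ⋯ ∧ Cₙ ≥ 0) holds if and only if for every integer x with 0 ≤ x ≤ D₁⋯Dₙ one has ∏_{i=1}^n (x + Cᵢ + 1) ≠ 0. -/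
theorem all_nonneg_iff_bounded_product_ne_zero (n : ℕ) (C D : Fin n → ℤ)
    (hD : ∀ i, 0 < D i) (hCD : ∀ i, |C i| ≤ D i) :
    (∀ i, 0 ≤ C i) ↔
      ∀ x : ℤ, 0 ≤ x → x ≤ ∏ i, D i → (∏ i, (x + C i + 1)) ≠ 0 := by
  constructor
  · intro h x hx _ hzero
    have hpos : 0 < ∏ i, (x + C i + 1) :=
      Finset.prod_pos (fun i _ => by have := h i; linarith)
    omega
  · intro h i
    by_contra hneg
    push_neg at hneg
    set x : ℤ := -C i - 1 with hxdef
    have hx0 : 0 ≤ x := by omega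
    have hxD : x ≤ ∏ j, D j := by
      have h1 : x < D i := by have := hCD i; rw [abs_le] at this; omega
      have h2 : D i ≤ ∏ j, D j := by
        have hp : 0 < ∏ j ∈ Finset.univ.erase i, D j :=
          Finset.prod_pos (fun j _ => hD j)
        have he : (∏ j ∈ Finset.univ.erase i, D j) * D i = ∏ j, D j :=
          Finset.prod_erase_mul _ _ (Finset.mem_univ i)
        nlinarith [hD i]
      omega
    exact h x hx0 hxD (Finset.prod_eq_zero (Finset.mem_univ i) (by omega))
end

section
/- Let C₁, …, Cₙ be integers. Then C₁ ≥ 0 ∨ ⋯ ∨ Cₙ ≥ 0 holds if and only if there exists a nonzero integer x such that for some i ∈ {1, …, n}, (4Cᵢ+2)x² + 1 is a perfect square. -/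
theorem exists_nonneg_iff_pell_disjunction (n : ℕ) (C : Fin n → ℤ) :
    (∃ i, 0 ≤ C i) ↔
      ∃ x : ℤ, x ≠ 0 ∧ ∃ i : Fin n, ∃ m : ℤ, (4 * C i + 2) * x^2 + 1 = m^2 := by
  constructor
  · rintro ⟨i, hi⟩
    have h0 : 0 < 4 * C i + 2 := by linarith
    have hns : ¬IsSquare (4 * C i + 2) := by
      rintro ⟨r, hr⟩
      rcases Int.even_or_odd r with ⟨k, hk⟩ | ⟨k, hk⟩ <;> subst hk
      · have : 4 * C i + 2 = 4 * (k * k) := by linarith [hr]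
        omega
      · have : 4 * C i + 2 = 4 * (k * k) + 4 * k + 1 := by linarith [hr]
        omega
    obtain ⟨m, x, hmx, hx⟩ := Pell.exists_of_not_isSquare h0 hns
    exact ⟨x, hx, i, m, by linarith⟩
  · rintro ⟨x, hx, i, m, hm⟩
    refine ⟨i, ?_⟩
    by_contra h
    push_neg at h
    have hx2 : 1 ≤ x^2 := by
      have : 0 < x^2 := by positivity
      omega
    have hC : 4 * C i + 2 ≤ -2 := by omega
    nlinarith [sq_nonneg m]
end

section
/- Let σ₀, τ₀, …, σ_k, τ_k be real numbers with 0 ≤ τᵢ − σᵢ ≤ 1 for all i = 0, …, k, and let W be an integer with W ≥ 1 + max{τᵢ − τ_{i+1} : i = 0, …, k−1}. Then every interval [σᵢ, τᵢ] (0 ≤ i ≤ k) contains an integer if and only if for every integer t, ∏_{i=0}^k (t − σᵢ − iW)(t + 1 − τᵢ − iW) ≥ 0. -/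
theorem intervals_contain_integer_iff_product_nonneg (k : ℕ) (σ τ : ℕ → ℝ) (W : ℤ)
    (hστ : ∀ i ≤ k, 0 ≤ τ i - σ i ∧ τ i - σ i ≤ 1)
    (hW : ∀ i < k, 1 + (τ i - τ (i+1)) ≤ (W : ℝ)) :
    (∀ i ≤ k, ∃ m : ℤ, σ i ≤ (m : ℝ) ∧ (m : ℝ) ≤ τ i) ↔
      ∀ t : ℤ, 0 ≤ ∏ i ∈ Finset.range (k+1),
        (((t : ℝ) - σ i - i * W) * ((t : ℝ) + 1 - τ i - i * W)) := by
  -- telescoping bound : τ i - τ (i+d) ≤ d * (W - 1)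
  have hT : ∀ d i : ℕ, i + d ≤ k → τ i - τ (i + d) ≤ (d : ℝ) * ((W : ℝ) - 1) := by
    intro d
    induction d with
    | zero => intro i _; simp
    | succ n ih =>
      intro i hik
      have h1 := ih i (by omega)
      have h2 := hW (i + n) (by omega)
      have he : i + (n + 1) = (i + n) + 1 := by omega
      rw [he]
      push_cast
      nlinarith
  constructor
  · intro h t
    apply Finset.prod_nonneg
    intro i hi
    have hik : i ≤ k := Nat.lt_succ_iff.mp (Finset.mem_range.mp hi)
    obtain ⟨m, hm1, hm2⟩ := h i hik
    by_contra hneg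
    push_neg at hneg
    have hσ1 := (hστ i hik).1
    have hσ2 := (hστ i hik).2
    have h1 : (t : ℝ) - σ i - i * W < 0 := by nlinarith
    have h2 : 0 < (t : ℝ) + 1 - τ i - i * W := by nlinarith
    have c1 : (t : ℝ) < ((m + (i : ℤ) * W : ℤ) : ℝ) := by push_cast; linarith
    have c2 : ((m + (i : ℤ) * W : ℤ) : ℝ) < ((t + 1 : ℤ) : ℝ) := by push_cast; linarith
    have d1 : t < m + (i : ℤ) * W := by exact_mod_cast c1
    have d2 : m + (i : ℤ) * W < t + 1 := by exact_mod_cast c2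
    omega
  · intro h
    by_contra hc
    push_neg at hc
    obtain ⟨i0, hi0k, hno⟩ := hc
    set t : ℤ := ⌊τ i0⌋ + i0 * W with ht
    have hfloor1 : (⌊τ i0⌋ : ℝ) ≤ τ i0 := Int.floor_le _
    have hfloor2 : τ i0 - 1 < (⌊τ i0⌋ : ℝ) := Int.sub_one_lt_floor (τ i0)
    have hσ0 := hστ i0 hi0k
    have hlt : (⌊τ i0⌋ : ℝ) < σ i0 := by
      by_contra hge
      push_neg at hge
      exact absurd hfloor1 (not_le.mpr (hno ⌊τ i0⌋ hge))
    have htR : (t : ℝ) = (⌊τ i0⌋ : ℝ) + (i0 : ℝ) * (W : ℝ) := by rw [ht]; push_cast; ring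
    have h1 : (t : ℝ) - σ i0 - i0 * W < 0 := by rw [htR]; linarith
    have h2 : 0 < (t : ℝ) + 1 - τ i0 - i0 * W := by rw [htR]; linarith
    have hneg : ((t : ℝ) - σ i0 - i0 * W) * ((t : ℝ) + 1 - τ i0 - i0 * W) < 0 :=
      mul_neg_of_neg_of_pos h1 h2
    have hpos : ∀ j ∈ (Finset.range (k + 1)).erase i0,
        0 < ((t : ℝ) - σ j - j * W) * ((t : ℝ) + 1 - τ j - j * W) := by
      intro j hj
      obtain ⟨hjne, hjr⟩ := Finset.mem_erase.mp hj
      have hjk : j ≤ k := Nat.lt_succ_iff.mp (Finset.mem_range.mp hjr)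
      have hσj1 := (hστ j hjk).1
      have hσj2 := (hστ j hjk).2
      by_contra hle
      push_neg at hle
      have hA : (t : ℝ) - σ j - j * W ≤ 0 := by nlinarith
      have hB : 0 ≤ (t : ℝ) + 1 - τ j - j * W := by nlinarith
      rcases lt_or_gt_of_ne hjne with hlt' | hgt'
      · -- j < i0 : use τ j - τ i0 ≤ (i0 - j)(W-1)
        obtain ⟨d, rfl⟩ : ∃ d, i0 = j + (d + 1) := ⟨i0 - j - 1, by omega⟩
        have hTT := hT (d + 1) j (by omega)
        push_cast at hTT h1 h2 hA hB ⊢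
        nlinarith
      · -- i0 < j : use τ i0 - τ j ≤ (j - i0)(W-1)
        obtain ⟨d, rfl⟩ : ∃ d, j = i0 + (d + 1) := ⟨j - i0 - 1, by omega⟩
        have hTT := hT (d + 1) i0 (by omega)
        push_cast at hTT h1 h2 hA hB ⊢
        nlinarith
    have hP : 0 < ∏ j ∈ (Finset.range (k + 1)).erase i0,
        (((t : ℝ) - σ j - j * W) * ((t : ℝ) + 1 - τ j - j * W)) :=
      Finset.prod_pos hpos
    have hmem : i0 ∈ Finset.range (k + 1) := Finset.mem_range.mpr (Nat.lt_succ_of_le hi0k)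
    have hprod := h t
    rw [← Finset.mul_prod_erase _ _ hmem] at hprod
    nlinarith
end

section
/- Let σ₀, τ₀, …, σ_k, τ_k be real numbers with 0 ≤ τᵢ − σᵢ ≤ 1 for all i, and let W be an integer with W ≥ 1 + max{τᵢ − τ_{i+1} : i = 0, …, k−1}. Then for any integer t with t ≤ τ₀ − 1 or t ≥ τ_k + kW, one has ∏_{i=0}^k (t − σᵢ − iW)(t + 1 − τᵢ − iW) ≥ 0. -/
theorem product_nonneg_of_extreme_t (k : ℕ) (σ τ : ℕ → ℝ) (W : ℤ)
    (hστ : ∀ i ≤ k, 0 ≤ τ i - σ i ∧ τ i - σ i ≤ 1)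
    (hW : ∀ i < k, 1 + (τ i - τ (i+1)) ≤ (W : ℝ))
    (t : ℤ) (ht : (t : ℝ) ≤ τ 0 - 1 ∨ τ k + k * W ≤ (t : ℝ)) :
    0 ≤ ∏ i ∈ Finset.range (k+1),
      (((t : ℝ) - σ i - i * W) * ((t : ℝ) + 1 - τ i - i * W)) := by
  have step : ∀ n < k, τ n + (n : ℝ) * W ≤ τ (n+1) + ((n : ℝ) + 1) * W := by
    intro n hn
    have := hW n hn
    nlinarith
  have mono : ∀ j ≤ k, ∀ i ≤ j, τ i + (i : ℝ) * W ≤ τ j + (j : ℝ) * W := by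
    intro j hj
    induction j with
    | zero => intro i hi; interval_cases i; exact le_rfl
    | succ n ih =>
      intro i hi
      rcases Nat.lt_succ_iff_lt_or_eq.mp (Nat.lt_succ_of_le hi) with h | h
      · have h1 := ih (Nat.le_of_succ_le hj) i (Nat.lt_succ_iff.mp h)
        have h2 := step n (Nat.lt_of_succ_le hj)
        push_cast
        push_cast at h1 h2
        linarith
      · subst h; exact le_rfl
  apply Finset.prod_nonneg
  intro i hi
  have hik : i ≤ k := Nat.lt_succ_iff.mp (Finset.mem_range.mp hi)
  obtain ⟨h0, h1⟩ := hστ i hik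
  rcases ht with hl | hr
  · -- all factors nonpositive
    have h2 := mono i hik 0 (Nat.zero_le i)
    push_cast at h2
    apply mul_nonneg_of_nonpos_of_nonpos <;> nlinarith
  · have h2 : τ i + (i : ℝ) * W ≤ τ k + (k : ℝ) * W := mono k le_rfl i hik
    apply mul_nonneg <;> nlinarith
end

section
/- Let B ≥ b > 0 be integers and let 0 < n₀ < n₁ < ⋯ < n_ν be integers. Suppose the integer c can be written as c = Σ_{i=0}^ν zᵢ B^{nᵢ} with each zᵢ ∈ {0, …, b−1}. Then: (a) 0 ≤ c ≤ b·B^{n_ν} − 1; (b) for each i = 1, …, ν, the interval [(c + 1 − b·B^{n_{i−1}})/B^{nᵢ}, c/B^{nᵢ}] contains an integer; and (c) c/B^{n₀} is an integer. -/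
theorem digit_representation_intervals (B b : ℤ) (hb : 0 < b) (hB : b ≤ B)
    (ν : ℕ) (n : ℕ → ℕ) (hn0 : 0 < n 0) (hn : ∀ i < ν, n i < n (i+1))
    (z : ℕ → ℤ) (hz : ∀ i ≤ ν, 0 ≤ z i ∧ z i ≤ b - 1)
    (c : ℤ) (hc : c = ∑ i ∈ Finset.range (ν+1), z i * B ^ n i) :
    (0 ≤ c ∧ c ≤ b * B ^ n ν - 1) ∧
    (∀ i, 1 ≤ i → i ≤ ν → ∃ m : ℤ,
      ((c : ℚ) + 1 - b * (B : ℚ) ^ n (i-1)) / (B : ℚ) ^ n i ≤ (m : ℚ) ∧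
      (m : ℚ) ≤ (c : ℚ) / (B : ℚ) ^ n i) ∧
    (∃ m : ℤ, (c : ℚ) / (B : ℚ) ^ n 0 = (m : ℚ)) := by
  have hBpos : (0:ℤ) < B := lt_of_lt_of_le hb hB
  have hB1 : (1:ℤ) ≤ B := hBpos
  -- monotonicity of n
  have hmono : ∀ k, k ≤ ν → ∀ j, j ≤ k → n j ≤ n k := by
    intro k hk
    induction k with
    | zero => intro j hj; simp_all
    | succ k ih =>
      intro j hj
      rcases Nat.lt_succ_iff_lt_or_eq.mp (Nat.lt_succ_of_le hj) with h | h
      · have h1 : n j ≤ n k := ih (by omega) j (by omega)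
        have h2 : n k < n (k+1) := hn k (by omega)
        omega
      · simp [h]
  -- partial sum bounds
  have key : ∀ j, j ≤ ν →
      0 ≤ (∑ i ∈ Finset.range (j+1), z i * B ^ n i) ∧
      (∑ i ∈ Finset.range (j+1), z i * B ^ n i) ≤ b * B ^ n j - 1 := by
    intro j hj
    induction j with
    | zero =>
      simp only [zero_add, Finset.sum_range_one]
      obtain ⟨hz0, hz1⟩ := hz 0 (by omega)
      have hp : (1:ℤ) ≤ B ^ n 0 := one_le_pow₀ hB1
      constructor
      · positivity
      · nlinarith
    | succ j ih =>
      obtain ⟨ih0, ih1⟩ := ih (by omega)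
      rw [Finset.sum_range_succ]
      obtain ⟨hz0, hz1⟩ := hz (j+1) hj
      have hp : (0:ℤ) < B ^ n (j+1) := pow_pos hBpos _
      have hstep : n j + 1 ≤ n (j+1) := hn j (by omega)
      have h1 : B ^ (n j + 1) ≤ B ^ n (j+1) := pow_le_pow_right₀ hB1 hstep
      have h2 : b * B ^ n j ≤ B ^ (n j + 1) := by
        rw [pow_succ]
        have : (0:ℤ) < B ^ n j := pow_pos hBpos _
        nlinarith
      constructor
      · have : (0:ℤ) ≤ z (j+1) * B ^ n (j+1) := by positivity
        linarith
      · nlinarith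
  -- tail divisibility
  have tail : ∀ i, i ≤ ν → ∃ m : ℤ,
      (∑ k ∈ Finset.Ico i (ν+1), z k * B ^ n k) = m * B ^ n i := by
    intro i hi
    refine ⟨∑ k ∈ Finset.Ico i (ν+1), z k * B ^ (n k - n i), ?_⟩
    rw [Finset.sum_mul]
    apply Finset.sum_congr rfl
    intro k hk
    simp only [Finset.mem_Ico] at hk
    have hnk : n i ≤ n k := hmono k (by omega) i hk.1
    rw [mul_assoc, ← pow_add, Nat.sub_add_cancel hnk]
  have hBQ : (0:ℚ) < (B:ℚ) := by exact_mod_cast hBpos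
  refine ⟨?_, ?_, ?_⟩
  · obtain ⟨h0, h1⟩ := key ν le_rfl
    exact ⟨hc ▸ h0, hc ▸ h1⟩
  · intro i hi1 hiν
    obtain ⟨m, hm⟩ := tail i hiν
    obtain ⟨hS0, hS1⟩ := key (i-1) (by omega)
    have hsplit : c = (∑ k ∈ Finset.range i, z k * B ^ n k) + m * B ^ n i := by
      rw [hc, ← hm, Finset.range_eq_Ico,
        ← Finset.sum_Ico_consecutive _ (Nat.zero_le i) (by omega : i ≤ ν+1),
        ← Finset.range_eq_Ico]
    have hieq : i - 1 + 1 = i := by omega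
    rw [hieq] at hS0 hS1
    have hle1 : m * B ^ n i ≤ c := by linarith
    have hle2 : c + 1 - b * B ^ n (i-1) ≤ m * B ^ n i := by linarith
    refine ⟨m, ?_, ?_⟩
    · rw [div_le_iff₀ (by positivity)]
      have : ((c:ℚ) + 1 - b * (B:ℚ) ^ n (i-1)) ≤ (m:ℚ) * (B:ℚ) ^ n i := by
        exact_mod_cast hle2
      linarith
    · rw [le_div_iff₀ (by positivity)]
      exact_mod_cast hle1
  · obtain ⟨m, hm⟩ := tail 0 (Nat.zero_le _)
    refine ⟨m, ?_⟩
    have : c = m * B ^ n 0 := by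
      rw [hc, ← hm, Finset.range_eq_Ico]
    rw [this]
    push_cast
    field_simp
end

section
/- Let B ≥ b > 0 and 0 < n₀ < ⋯ < n_ν be integers, and let c be an integer. Then c has the form Σ_{i=0}^ν zᵢ B^{nᵢ} with all zᵢ ∈ {0, …, b−1} if and only if each of the following intervals contains an integer: [σ₀, τ₀] where σ₀ = τ₀ = c/B^{n₀}; [σᵢ, τᵢ] for i = 1, …, ν where σᵢ = (c + 1 − b·B^{n_{i−1}})/B^{nᵢ} and τᵢ = c/B^{nᵢ}; and [σ_{ν+1}, τ_{ν+1}] where σ_{ν+1} = (c + 1 − b·B^{n_ν})/((b² + c²)·B^{n_ν}) and τ_{ν+1} = c/((b² + c²)·B^{n_ν}). -/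
lemma my_emod_le (a m : ℤ) (h : 0 ≤ a) (hm : 0 < m) : a % m ≤ a := by
  have h1 : 0 ≤ a / m := Int.ediv_nonneg h hm.le
  have := Int.emod_def a m
  nlinarith

lemma key_int (B b : ℤ) (hb : 0 < b) (hB : b ≤ B) (ν : ℕ) (n : ℕ → ℕ)
    (hn : ∀ i < ν, n i < n (i+1)) (c : ℤ) :
    (∃ z : ℕ → ℤ, (∀ i ≤ ν, 0 ≤ z i ∧ z i ≤ b - 1) ∧
        c = ∑ i ∈ Finset.range (ν+1), z i * B ^ n i) ↔
      ((B ^ n 0 ∣ c) ∧ (∀ i, 1 ≤ i → i ≤ ν → c % B ^ n i < b * B ^ n (i-1)) ∧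
        0 ≤ c ∧ c < b * B ^ n ν) := by
  have hBpos : (0:ℤ) < B := lt_of_lt_of_le hb hB
  have hB1 : (1:ℤ) ≤ B := hBpos
  have hpow : ∀ k : ℕ, (0:ℤ) < B ^ k := fun k => pow_pos hBpos k
  have hmon : ∀ i j, i ≤ j → j ≤ ν → n i ≤ n j := by
    intro i j hij hj
    induction j with
    | zero => have : i = 0 := Nat.le_zero.mp hij; simp [this]
    | succ j ih =>
      by_cases h : i ≤ j
      · exact le_trans (ih h (by omega)) (le_of_lt (hn j (by omega)))
      · have : i = j + 1 := by omega
        rw [this]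
  have bpow : ∀ j, j + 1 ≤ ν → b * B ^ n j ≤ B ^ n (j+1) := by
    intro j hj
    have h1 : n j + 1 ≤ n (j+1) := hn j (by omega)
    calc b * B ^ n j ≤ B * B ^ n j := mul_le_mul_of_nonneg_right hB (hpow _).le
      _ = B ^ (n j + 1) := by ring
      _ ≤ B ^ n (j+1) := pow_le_pow_right₀ hB1 h1
  constructor
  · rintro ⟨z, hzb, hc⟩
    set S : ℕ → ℤ := fun k => ∑ i ∈ Finset.range k, z i * B ^ n i with hSdef
    have hS : ∀ k, k ≤ ν → 0 ≤ S (k+1) ∧ S (k+1) < b * B ^ n k := by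
      intro k hk
      induction k with
      | zero =>
        have h0 := hzb 0 (by omega)
        have hp := hpow (n 0)
        have hone : S (0+1) = z 0 * B ^ n 0 := by
          simp [hSdef]
        constructor
        · rw [hone]; exact mul_nonneg h0.1 hp.le
        · rw [hone]; nlinarith [h0.1, h0.2]
      | succ k ih =>
        obtain ⟨ih0, ih1⟩ := ih (by omega)
        have hzk := hzb (k+1) (by omega)
        have hp := hpow (n (k+1))
        have hbp := bpow k (by omega)
        have hsucc : S (k+2) = S (k+1) + z (k+1) * B ^ n (k+1) := by
          simp [hSdef, Finset.sum_range_succ]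
        constructor
        · rw [hsucc]; nlinarith [hzk.1]
        · rw [hsucc]; nlinarith [hzk.1, hzk.2]
    have hcS : c = S (ν+1) := hc
    refine ⟨?_, ?_, ?_, ?_⟩
    · rw [hc]
      apply Finset.dvd_sum
      intro i hi
      exact dvd_mul_of_dvd_right (pow_dvd_pow B (hmon 0 i (Nat.zero_le i)
        (by simpa using Nat.lt_succ_iff.mp (Finset.mem_range.mp hi)))) _
    · intro i h1 hi
      obtain ⟨j, rfl⟩ : ∃ j, i = j + 1 := ⟨i - 1, by omega⟩
      simp only [Nat.add_sub_cancel]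
      have hdvd : B ^ n (j+1) ∣ c - S (j+1) := by
        have hsplit : ∑ k ∈ Finset.Ico 0 (j+1), z k * B ^ n k
            + ∑ k ∈ Finset.Ico (j+1) (ν+1), z k * B ^ n k
            = ∑ k ∈ Finset.Ico 0 (ν+1), z k * B ^ n k :=
          Finset.sum_Ico_consecutive _ (by omega) (by omega)
        have : c - S (j+1) = ∑ k ∈ Finset.Ico (j+1) (ν+1), z k * B ^ n k := by
          rw [hcS]
          simp only [hSdef, Finset.range_eq_Ico]
          linarith [hsplit]
        rw [this]
        apply Finset.dvd_sum
        intro k hk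
        obtain ⟨hk1, hk2⟩ := Finset.mem_Ico.mp hk
        exact dvd_mul_of_dvd_right (pow_dvd_pow B (hmon (j+1) k hk1 (by omega))) _
      have hmod : c % B ^ n (j+1) = S (j+1) % B ^ n (j+1) :=
        Int.emod_eq_emod_iff_emod_sub_eq_zero.mpr (Int.emod_eq_zero_of_dvd hdvd)
      obtain ⟨hS0, hS1⟩ := hS j (by omega)
      rw [hmod, Int.emod_eq_of_lt hS0 (lt_of_lt_of_le hS1 (bpow j (by omega)))]
      exact hS1
    · rw [hcS]; exact (hS ν le_rfl).1
    · rw [hcS]; exact (hS ν le_rfl).2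
  · rintro ⟨hdvd, hmod, hc0, hcub⟩
    set r : ℕ → ℤ := fun i => if i ≤ ν then c % B ^ n i else c with hrdef
    have hr0 : r 0 = 0 := by
      simp only [hrdef, if_pos (Nat.zero_le ν)]
      exact Int.emod_eq_zero_of_dvd hdvd
    have hrlast : r (ν+1) = c := by simp [hrdef]
    have hlb : ∀ i, 0 ≤ r i := by
      intro i
      simp only [hrdef]
      split
      · exact Int.emod_nonneg c (hpow _).ne'
      · exact hc0
    have hcong : ∀ i, i ≤ ν → B ^ n i ∣ r (i+1) - r i := by
      intro i hi
      have hri : r i = c % B ^ n i := by simp [hrdef, if_pos hi]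
      by_cases h : i + 1 ≤ ν
      · have hri1 : r (i+1) = c % B ^ n (i+1) := by simp [hrdef, if_pos h]
        rw [hri, hri1]
        apply Int.dvd_of_emod_eq_zero
        apply Int.emod_eq_emod_iff_emod_sub_eq_zero.mp
        rw [Int.emod_emod_of_dvd c (pow_dvd_pow B (hmon i (i+1) (by omega) h)),
          Int.emod_emod_of_dvd c (dvd_refl _)]
      · have hri1 : r (i+1) = c := by
          simp only [hrdef]
          rw [if_neg (by omega)]
        rw [hri1, hri]
        exact ⟨c / B ^ n i, by rw [Int.emod_def]; ring⟩
    have hub : ∀ i, i ≤ ν → r (i+1) < b * B ^ n i := by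
      intro i hi
      by_cases h : i + 1 ≤ ν
      · have hri1 : r (i+1) = c % B ^ n (i+1) := by simp [hrdef, if_pos h]
        rw [hri1]
        have := hmod (i+1) (by omega) h
        simpa using this
      · have heq : i = ν := by omega
        have hri1 : r (i+1) = c := by
          simp only [hrdef]
          rw [if_neg (by omega)]
        rw [hri1, heq]
        exact hcub
    have hrle : ∀ i, i ≤ ν → r i ≤ r (i+1) := by
      intro i hi
      have hri : r i = c % B ^ n i := by simp [hrdef, if_pos hi]
      have h1 : r (i+1) % B ^ n i = r i % B ^ n i :=
        Int.emod_eq_emod_iff_emod_sub_eq_zero.mpr (Int.emod_eq_zero_of_dvd (hcong i hi))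
      have h2 : r i % B ^ n i = r i := by
        rw [hri]
        exact Int.emod_emod_of_dvd c (dvd_refl _)
      calc r i = r (i+1) % B ^ n i := by rw [h1, h2]
        _ ≤ r (i+1) := my_emod_le _ _ (hlb (i+1)) (hpow _)
    refine ⟨fun i => (r (i+1) - r i) / B ^ n i, ?_, ?_⟩
    · intro i hi
      show 0 ≤ (r (i+1) - r i) / B ^ n i ∧ (r (i+1) - r i) / B ^ n i ≤ b - 1
      have hzmul : (r (i+1) - r i) / B ^ n i * B ^ n i = r (i+1) - r i :=
        Int.ediv_mul_cancel (hcong i hi)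
      constructor
      · exact Int.ediv_nonneg (sub_nonneg.mpr (hrle i hi)) (hpow _).le
      · have hlt : (r (i+1) - r i) / B ^ n i * B ^ n i < b * B ^ n i := by
          rw [hzmul]
          have := hlb i
          have := hub i hi
          linarith
        have := lt_of_mul_lt_mul_right hlt (hpow (n i)).le
        linarith [Int.lt_iff_add_one_le.mp this]
    · show c = ∑ i ∈ Finset.range (ν+1), (r (i+1) - r i) / B ^ n i * B ^ n i
      have hterms : ∀ i ∈ Finset.range (ν+1),
          (r (i+1) - r i) / B ^ n i * B ^ n i = r (i+1) - r i := by
        intro i hi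
        have := Finset.mem_range.mp hi
        exact Int.ediv_mul_cancel (hcong i (by omega))
      rw [Finset.sum_congr rfl hterms, Finset.sum_range_sub, hrlast, hr0, sub_zero]


lemma exists_mul_between (a c d : ℤ) (hd : 0 < d) :
    (∃ m : ℤ, a ≤ m * d ∧ m * d ≤ c) ↔ a ≤ c - c % d := by
  have hdef : c % d = c - d * (c / d) := Int.emod_def c d
  constructor
  · rintro ⟨m, h1, h2⟩
    have hm : m ≤ c / d := (Int.le_ediv_iff_mul_le hd).2 h2
    have : m * d ≤ c / d * d := mul_le_mul_of_nonneg_right hm hd.le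
    nlinarith
  · intro h
    refine ⟨c / d, by nlinarith, ?_⟩
    have := Int.emod_nonneg c hd.ne'
    nlinarith

lemma rat_between (A C d : ℚ) (hd : 0 < d) :
    (∃ m : ℤ, A / d ≤ (m:ℚ) ∧ (m:ℚ) ≤ C / d) ↔ (∃ m : ℤ, A ≤ (m:ℚ) * d ∧ (m:ℚ) * d ≤ C) := by
  constructor <;> rintro ⟨m, h1, h2⟩ <;> refine ⟨m, ?_, ?_⟩
  · exact (div_le_iff₀ hd).1 h1
  · exact (le_div_iff₀ hd).1 h2
  · exact (div_le_iff₀ hd).2 h1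
  · exact (le_div_iff₀ hd).2 h2

lemma last_cond (b c E : ℤ) (hb : 1 ≤ b) (hE : 1 ≤ E) :
    c % ((b^2+c^2)*E) < b*E ↔ 0 ≤ c ∧ c < b*E := by
  have hD : 0 < (b^2+c^2)*E := by nlinarith [sq_nonneg c, sq_nonneg b]
  constructor
  · intro h
    have hc0 : 0 ≤ c := by
      by_contra hc
      push_neg at hc
      have hc1 : c ≤ -1 := by omega
      have hlb : 0 ≤ c + (b^2+c^2)*E := by nlinarith
      have hub : c + (b^2+c^2)*E < (b^2+c^2)*E := by omega
      have hmod : c % ((b^2+c^2)*E) = c + (b^2+c^2)*E := by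
        have : (c + (b^2+c^2)*E) % ((b^2+c^2)*E) = c % ((b^2+c^2)*E) := by simp
        rw [← this, Int.emod_eq_of_lt hlb hub]
      rw [hmod] at h
      nlinarith
    refine ⟨hc0, ?_⟩
    by_contra hc
    push_neg at hc
    have hc1 : 1 ≤ c := by nlinarith
    have hub : c < (b^2+c^2)*E := by nlinarith
    rw [Int.emod_eq_of_lt hc0 hub] at h
    omega
  · rintro ⟨h0, h1⟩
    have hub : c < (b^2+c^2)*E := by nlinarith
    rw [Int.emod_eq_of_lt h0 hub]
    exact h1

theorem digit_representation_iff_intervals (B b : ℤ) (hb : 0 < b) (hB : b ≤ B)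
    (ν : ℕ) (n : ℕ → ℕ) (hn0 : 0 < n 0) (hn : ∀ i < ν, n i < n (i+1))
    (c : ℤ) :
    (∃ z : ℕ → ℤ, (∀ i ≤ ν, 0 ≤ z i ∧ z i ≤ b - 1) ∧
        c = ∑ i ∈ Finset.range (ν+1), z i * B ^ n i) ↔
      ((∃ m : ℤ, (c : ℚ) / (B : ℚ) ^ n 0 = (m : ℚ)) ∧
       (∀ i, 1 ≤ i → i ≤ ν → ∃ m : ℤ,
          ((c : ℚ) + 1 - b * (B : ℚ) ^ n (i-1)) / (B : ℚ) ^ n i ≤ (m : ℚ) ∧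
          (m : ℚ) ≤ (c : ℚ) / (B : ℚ) ^ n i) ∧
       (∃ m : ℤ,
          ((c : ℚ) + 1 - b * (B : ℚ) ^ n ν) / (((b : ℚ)^2 + (c : ℚ)^2) * (B : ℚ) ^ n ν) ≤ (m : ℚ) ∧
          (m : ℚ) ≤ (c : ℚ) / (((b : ℚ)^2 + (c : ℚ)^2) * (B : ℚ) ^ n ν))) := by
  have hBpos : (0:ℤ) < B := lt_of_lt_of_le hb hB
  have hpow : ∀ k : ℕ, (0:ℤ) < B ^ k := fun k => pow_pos hBpos k
  have hpowQ : ∀ k : ℕ, (0:ℚ) < (B:ℚ) ^ k := by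
    intro k
    have := hpow k
    exact_mod_cast this
  rw [key_int B b hb hB ν n hn c]
  constructor
  · rintro ⟨hdvd, hmod, hc0, hcub⟩
    refine ⟨?_, ?_, ?_⟩
    · obtain ⟨m, hm⟩ := hdvd
      refine ⟨m, ?_⟩
      rw [div_eq_iff (hpowQ (n 0)).ne']
      rw [hm]
      push_cast
      ring
    · intro i h1 hi
      rw [rat_between _ _ _ (hpowQ (n i))]
      have hA : ((c:ℚ) + 1 - b * (B:ℚ) ^ n (i-1)) = ((c + 1 - b * B ^ n (i-1) : ℤ) : ℚ) := by
        push_cast; ring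
      rw [hA]
      have key : ∃ m : ℤ, (c + 1 - b * B ^ n (i-1)) ≤ m * B ^ n i ∧ m * B ^ n i ≤ c := by
        rw [exists_mul_between _ _ _ (hpow (n i))]
        have := hmod i h1 hi
        have h2 := Int.emod_nonneg c (hpow (n i)).ne'
        linarith [Int.lt_iff_add_one_le.mp this]
      obtain ⟨m, hm1, hm2⟩ := key
      refine ⟨m, ?_, ?_⟩
      · have : ((c + 1 - b * B ^ n (i-1) : ℤ) : ℚ) ≤ ((m * B ^ n i : ℤ) : ℚ) := by
          exact_mod_cast hm1
        push_cast at this ⊢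
        linarith
      · have : ((m * B ^ n i : ℤ) : ℚ) ≤ ((c : ℤ) : ℚ) := by exact_mod_cast hm2
        push_cast at this ⊢
        linarith
    · have hD : (0:ℤ) < (b^2 + c^2) * B ^ n ν := by nlinarith [sq_nonneg c, sq_nonneg b, hpow (n ν)]
      have hDQ : (0:ℚ) < ((b:ℚ)^2 + (c:ℚ)^2) * (B:ℚ) ^ n ν := by exact_mod_cast hD
      rw [rat_between _ _ _ hDQ]
      have key : ∃ m : ℤ, (c + 1 - b * B ^ n ν) ≤ m * ((b^2 + c^2) * B ^ n ν) ∧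
          m * ((b^2 + c^2) * B ^ n ν) ≤ c := by
        rw [exists_mul_between _ _ _ hD]
        have hlc := (last_cond b c (B ^ n ν) hb (hpow (n ν))).mpr ⟨hc0, hcub⟩
        linarith [Int.lt_iff_add_one_le.mp hlc]
      obtain ⟨m, hm1, hm2⟩ := key
      refine ⟨m, ?_, ?_⟩
      · have : ((c + 1 - b * B ^ n ν : ℤ) : ℚ) ≤ ((m * ((b^2 + c^2) * B ^ n ν) : ℤ) : ℚ) := by
          exact_mod_cast hm1
        push_cast at this ⊢
        linarith
      · have : ((m * ((b^2 + c^2) * B ^ n ν) : ℤ) : ℚ) ≤ ((c : ℤ) : ℚ) := by exact_mod_cast hm2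
        push_cast at this ⊢
        linarith
  · rintro ⟨⟨m0, hm0⟩, hmid, hlast⟩
    refine ⟨?_, ?_, ?_⟩
    · rw [div_eq_iff (hpowQ (n 0)).ne'] at hm0
      refine ⟨m0, ?_⟩
      have : (c : ℚ) = ((B ^ n 0 * m0 : ℤ) : ℚ) := by push_cast; linarith [hm0]
      exact_mod_cast this
    · intro i h1 hi
      obtain ⟨m, hm1, hm2⟩ := hmid i h1 hi
      rw [div_le_iff₀ (hpowQ (n i))] at hm1
      rw [le_div_iff₀ (hpowQ (n i))] at hm2
      have hm1' : c + 1 - b * B ^ n (i-1) ≤ m * B ^ n i := by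
        have : ((c + 1 - b * B ^ n (i-1) : ℤ) : ℚ) ≤ ((m * B ^ n i : ℤ) : ℚ) := by
          push_cast
          linarith
        exact_mod_cast this
      have hm2' : m * B ^ n i ≤ c := by
        have : ((m * B ^ n i : ℤ) : ℚ) ≤ ((c : ℤ) : ℚ) := by push_cast; linarith
        exact_mod_cast this
      have hex : c + 1 - b * B ^ n (i-1) ≤ c - c % B ^ n i :=
        (exists_mul_between _ _ _ (hpow (n i))).mp ⟨m, hm1', hm2'⟩
      have : c % B ^ n i + 1 ≤ b * B ^ n (i-1) := by linarith
      linarith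
    · obtain ⟨m, hm1, hm2⟩ := hlast
      have hD : (0:ℤ) < (b^2 + c^2) * B ^ n ν := by nlinarith [sq_nonneg c, sq_nonneg b, hpow (n ν)]
      have hDQ : (0:ℚ) < ((b:ℚ)^2 + (c:ℚ)^2) * (B:ℚ) ^ n ν := by exact_mod_cast hD
      rw [div_le_iff₀ hDQ] at hm1
      rw [le_div_iff₀ hDQ] at hm2
      have hm1' : c + 1 - b * B ^ n ν ≤ m * ((b^2 + c^2) * B ^ n ν) := by
        have : ((c + 1 - b * B ^ n ν : ℤ) : ℚ) ≤ ((m * ((b^2 + c^2) * B ^ n ν) : ℤ) : ℚ) := by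
          push_cast
          linarith
        exact_mod_cast this
      have hm2' : m * ((b^2 + c^2) * B ^ n ν) ≤ c := by
        have : ((m * ((b^2 + c^2) * B ^ n ν) : ℤ) : ℚ) ≤ ((c : ℤ) : ℚ) := by
          push_cast; linarith
        exact_mod_cast this
      have hex : c + 1 - b * B ^ n ν ≤ c - c % ((b^2 + c^2) * B ^ n ν) :=
        (exists_mul_between _ _ _ hD).mp ⟨m, hm1', hm2'⟩
      have : c % ((b^2 + c^2) * B ^ n ν) < b * B ^ n ν := by linarith
      exact (last_cond b c (B ^ n ν) hb (hpow (n ν))).mp this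
end

section
/- Let B ≥ b > 0 and 0 < n₀ < ⋯ < n_ν be integers, and let c be an integer such that: c/B^{n₀} is an integer; for each i = 1, …, ν there is an integer xᵢ with (c + 1 − b·B^{n_{i−1}})/B^{nᵢ} ≤ xᵢ ≤ c/B^{nᵢ}; and there is an integer x_{ν+1} with (c + 1 − b·B^{n_ν})/((b²+c²)·B^{n_ν}) ≤ x_{ν+1} ≤ c/((b²+c²)·B^{n_ν}). Then 0 ≤ c < b·B^{n_ν}, and c = Σ_{i=0}^ν zᵢ B^{nᵢ} for some z₀, …, z_ν ∈ {0, …, b−1}. -/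
private lemma emod_le_self_aux {a m : ℤ} (ha : 0 ≤ a) (hm : 0 < m) : a % m ≤ a := by
  conv_rhs => rw [← Int.mul_ediv_add_emod a m]
  have : 0 ≤ m * (a / m) := mul_nonneg hm.le (Int.ediv_nonneg ha hm.le)
  linarith

theorem digit_representation_of_intervals (B b : ℤ) (hb : 0 < b) (hB : b ≤ B)
    (ν : ℕ) (n : ℕ → ℕ) (hn0 : 0 < n 0) (hn : ∀ i < ν, n i < n (i+1))
    (c : ℤ)
    (h0 : ∃ m : ℤ, (c : ℚ) / (B : ℚ) ^ n 0 = (m : ℚ))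
    (hmid : ∀ i, 1 ≤ i → i ≤ ν → ∃ x : ℤ,
        ((c : ℚ) + 1 - b * (B : ℚ) ^ n (i-1)) / (B : ℚ) ^ n i ≤ (x : ℚ) ∧
        (x : ℚ) ≤ (c : ℚ) / (B : ℚ) ^ n i)
    (hlast : ∃ x : ℤ,
        ((c : ℚ) + 1 - b * (B : ℚ) ^ n ν) / (((b : ℚ)^2 + (c : ℚ)^2) * (B : ℚ) ^ n ν) ≤ (x : ℚ) ∧
        (x : ℚ) ≤ (c : ℚ) / (((b : ℚ)^2 + (c : ℚ)^2) * (B : ℚ) ^ n ν)) :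
    (0 ≤ c ∧ c < b * B ^ n ν) ∧
    ∃ z : ℕ → ℤ, (∀ i ≤ ν, 0 ≤ z i ∧ z i ≤ b - 1) ∧
      c = ∑ i ∈ Finset.range (ν+1), z i * B ^ n i := by
  have hB0 : (0:ℤ) < B := lt_of_lt_of_le hb hB
  have hN : ∀ i : ℕ, (0:ℤ) < B ^ n i := fun i => pow_pos hB0 _
  have hNQ : ∀ i : ℕ, (0:ℚ) < (B:ℚ) ^ n i := fun i => by exact_mod_cast hN i
  have hBN1 : (1:ℤ) ≤ B ^ n ν := hN ν
  have hcc : c ≤ c ^ 2 := by nlinarith [sq_nonneg c, sq_nonneg (c - 1)]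
  have hcc' : -c ≤ c ^ 2 := by nlinarith [sq_nonneg c, sq_nonneg (c + 1)]
  -- Step 1 : 0 ≤ c < b * B ^ n ν
  obtain ⟨x, hx1, hx2⟩ := hlast
  set D : ℤ := (b ^ 2 + c ^ 2) * B ^ n ν with hD
  have hD0 : (0:ℤ) < D := by positivity
  have hDQ : ((D:ℚ)) = ((b:ℚ)^2 + (c:ℚ)^2) * (B:ℚ) ^ n ν := by rw [hD]; push_cast; ring
  have hDQ0 : (0:ℚ) < ((b:ℚ)^2 + (c:ℚ)^2) * (B:ℚ) ^ n ν := by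
    rw [← hDQ]; exact_mod_cast hD0
  have hx2' : x * D ≤ c := by
    have := (le_div_iff₀ hDQ0).mp hx2
    rw [← hDQ] at this
    exact_mod_cast this
  have hx1' : c + 1 - b * B ^ n ν ≤ x * D := by
    have := (div_le_iff₀ hDQ0).mp hx1
    rw [← hDQ] at this
    exact_mod_cast this
  have hcD : c < D := by
    have h2 : c ^ 2 ≤ c ^ 2 * B ^ n ν := le_mul_of_one_le_right (sq_nonneg c) hBN1
    have h3 : 0 < b ^ 2 * B ^ n ν := by positivity
    rw [hD]; nlinarith
  have hlo : -D < c + 1 - b * B ^ n ν := by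
    have h1 : b * B ^ n ν ≤ b ^ 2 * B ^ n ν :=
      mul_le_mul_of_nonneg_right (by nlinarith) (hN ν).le
    have h2 : c ^ 2 ≤ c ^ 2 * B ^ n ν := le_mul_of_one_le_right (sq_nonneg c) hBN1
    rw [hD]; nlinarith
  have hxle : x ≤ 0 := by
    by_contra h
    push_neg at h
    have h1x : (1:ℤ) ≤ x := h
    have : D ≤ x * D := le_mul_of_one_le_left hD0.le h1x
    linarith
  have hxge : 0 ≤ x := by
    by_contra h
    push_neg at h
    have h1x : x ≤ -1 := by linarith [Int.add_one_le_iff.mpr h]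
    have : x * D ≤ -1 * D := mul_le_mul_of_nonneg_right h1x hD0.le
    linarith
  have hx0 : x = 0 := le_antisymm hxle hxge
  rw [hx0] at hx1' hx2'
  simp only [zero_mul] at hx1' hx2'
  have hc0 : 0 ≤ c := hx2'
  have hcb : c < b * B ^ n ν := by linarith
  refine ⟨⟨hc0, hcb⟩, ?_⟩
  -- divisibility from h0
  obtain ⟨m, hm⟩ := h0
  have hdvd0 : B ^ n 0 ∣ c := by
    refine ⟨m, ?_⟩
    have hne : ((B:ℚ)) ^ n 0 ≠ 0 := (hNQ 0).ne'
    field_simp at hm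
    have : (c:ℚ) = ((B ^ n 0 * m : ℤ) : ℚ) := by push_cast; rw [hm]
    exact_mod_cast this
  -- mod bounds from hmid
  have hmod : ∀ i, 1 ≤ i → i ≤ ν → c % B ^ n i < b * B ^ n (i-1) := by
    intro i h1 h2
    obtain ⟨x, hx1, hx2⟩ := hmid i h1 h2
    have hx2' : x * B ^ n i ≤ c := by
      have := (le_div_iff₀ (hNQ i)).mp hx2
      exact_mod_cast this
    have hx1' : c + 1 - b * B ^ n (i-1) ≤ x * B ^ n i := by
      have := (div_le_iff₀ (hNQ i)).mp hx1
      exact_mod_cast this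
    have hnn : 0 ≤ c - x * B ^ n i := by linarith
    have heq : (c - x * B ^ n i) % B ^ n i = c % B ^ n i := by
      simp [Int.sub_emod, Int.mul_emod_left, Int.emod_emod_of_dvd]
    have hle : c % B ^ n i ≤ c - x * B ^ n i := by
      rw [← heq]; exact emod_le_self_aux hnn (hN i)
    linarith
  -- digits
  set z : ℕ → ℤ := fun i => if i < ν then (c % B ^ n (i+1)) / B ^ n i else c / B ^ n i with hz
  refine ⟨z, ?_, ?_⟩
  · intro i hi
    rcases lt_or_eq_of_le hi with hi' | hi'
    · have ha0 : 0 ≤ c % B ^ n (i+1) := Int.emod_nonneg c (hN (i+1)).ne'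
      have hab : c % B ^ n (i+1) < b * B ^ n i := by
        have := hmod (i+1) (by omega) (by omega)
        simpa using this
      have hzi : z i = (c % B ^ n (i+1)) / B ^ n i := by simp [hz, hi']
      constructor
      · rw [hzi]; exact Int.ediv_nonneg ha0 (hN i).le
      · rw [hzi]
        have : (c % B ^ n (i+1)) / B ^ n i < b := by
          rw [Int.ediv_lt_iff_lt_mul (hN i)]
          exact hab
        linarith [Int.add_one_le_iff.mpr this]
    · have hzi : z i = c / B ^ n i := by simp [hz, hi']
      constructor
      · rw [hzi]; exact Int.ediv_nonneg hc0 (hN i).le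
      · rw [hzi]
        have : c / B ^ n i < b := by
          rw [Int.ediv_lt_iff_lt_mul (hN i)]
          rw [hi']
          exact hcb
        linarith [Int.add_one_le_iff.mpr this]
  · -- telescoping sum
    set f : ℕ → ℤ := fun i => if i ≤ ν then c % B ^ n i else c with hf
    have hstep : ∀ i ∈ Finset.range (ν+1), z i * B ^ n i = f (i+1) - f i := by
      intro i hi
      rw [Finset.mem_range] at hi
      rcases lt_or_eq_of_le (Nat.lt_succ_iff.mp hi) with hi' | hi'
      · have hfi1 : f (i+1) = c % B ^ n (i+1) := by simp [hf, Nat.succ_le_of_lt hi']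
        have hfi : f i = c % B ^ n i := by simp [hf, hi'.le]
        have hzi : z i = (c % B ^ n (i+1)) / B ^ n i := by simp [hz, hi']
        have hdvd : B ^ n i ∣ B ^ n (i+1) := pow_dvd_pow B (hn i hi').le
        have hmm : (c % B ^ n (i+1)) % B ^ n i = c % B ^ n i :=
          Int.emod_emod_of_dvd c hdvd
        have hdm := Int.mul_ediv_add_emod (c % B ^ n (i+1)) (B ^ n i)
        rw [hfi1, hfi, hzi, ← hmm]
        linarith
      · have hfi1 : f (i+1) = c := by simp [hf, hi']
        have hfi : f i = c % B ^ n i := by simp [hf, hi'.le]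
        have hzi : z i = c / B ^ n i := by simp [hz, hi']
        have hdm := Int.mul_ediv_add_emod c (B ^ n i)
        rw [hfi1, hfi, hzi]
        linarith
    rw [Finset.sum_congr rfl hstep, Finset.sum_range_sub f]
    have hf0 : f 0 = 0 := by
      simp [hf, Int.emod_eq_zero_of_dvd hdvd0]
    have hfν : f (ν+1) = c := by simp [hf]
    rw [hf0, hfν, sub_zero]
end

section
/- Let k and m be integers with k > 0, k even, and m ≡ 3 (mod 4), and let b be an integer. Then |m − b^k| = min over all integers x of |m − x^k| if and only if |m − b^k| < |m − (b+1)^k| and |m − b^k| < |m − (b−1)^k|. -/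
theorem nearest_kth_power_iff_local (k : ℕ) (m b : ℤ)
    (hk : 0 < k) (hke : Even k) (hm : m % 4 = 3) :
    (∀ x : ℤ, |m - b ^ k| ≤ |m - x ^ k|) ↔
      (|m - b ^ k| < |m - (b + 1) ^ k| ∧ |m - b ^ k| < |m - (b - 1) ^ k|) := by
  have hmono : ∀ p q : ℤ, 0 ≤ p → p < q → p ^ k < q ^ k := by
    intro p q hp hpq
    exact pow_lt_pow_left₀ hpq hp hk.ne'
  have hmonole : ∀ p q : ℤ, 0 ≤ p → p ≤ q → p ^ k ≤ q ^ k := by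
    intro p q hp hpq
    exact pow_le_pow_left₀ hp hpq k
  have habs : ∀ x : ℤ, x ^ k = |x| ^ k := fun x => (hke.pow_abs x).symm
  have key : ∀ a a' : ℤ, a < a' → (|m - a| < |m - a'| ↔ 2 * m < a + a') := by
    intro a a' h
    rcases abs_cases (m - a) with ⟨h1, h1'⟩ | ⟨h1, h1'⟩ <;>
      rcases abs_cases (m - a') with ⟨h2, h2'⟩ | ⟨h2, h2'⟩ <;>
      rw [h1, h2] <;> omega
  have key2 : ∀ a a' : ℤ, a < a' → (|m - a'| < |m - a| ↔ a + a' < 2 * m) := by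
    intro a a' h
    rcases abs_cases (m - a) with ⟨h1, h1'⟩ | ⟨h1, h1'⟩ <;>
      rcases abs_cases (m - a') with ⟨h2, h2'⟩ | ⟨h2, h2'⟩ <;>
      rw [h1, h2] <;> omega
  -- sum of k-th powers of consecutive integers is odd
  have hodd : ∀ c : ℤ, 2 * m ≠ c ^ k + (c + 1) ^ k := by
    intro c hc
    have : Odd (c ^ k + (c + 1) ^ k) := by
      rcases Int.even_or_odd c with he | ho
      · have h1 : Even (c ^ k) := Int.even_pow.mpr ⟨he, hk.ne'⟩
        have h2 : Odd ((c + 1) ^ k) := (Even.add_one he).pow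
        exact h1.add_odd h2
      · have h1 : Odd (c ^ k) := ho.pow
        have h2 : Even ((c + 1) ^ k) := Int.even_pow.mpr ⟨Odd.add_one ho, hk.ne'⟩
        exact h1.add_even h2
    rcases this with ⟨t, ht⟩
    omega
  -- powers of distinct integers with distinct abs are distinct
  have hne : ∀ p q : ℤ, |p| ≠ |q| → p ^ k ≠ q ^ k := by
    intro p q hpq heq
    rw [habs p, habs q] at heq
    rcases lt_trichotomy |p| |q| with h | h | h
    · exact absurd heq (hmono _ _ (abs_nonneg p) h).ne
    · exact hpq h
    · exact absurd heq.symm (hmono _ _ (abs_nonneg q) h).ne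
  constructor
  · intro h
    refine ⟨lt_of_le_of_ne (h _) ?_, lt_of_le_of_ne (h _) ?_⟩
    · intro heq
      rcases abs_eq_abs.mp heq with h1 | h1
      · have : b ^ k = (b + 1) ^ k := by omega
        refine hne b (b + 1) ?_ this
        intro habs'
        rcases abs_eq_abs.mp habs' with h2 | h2 <;> omega
      · exact hodd b (by linarith)
    · intro heq
      rcases abs_eq_abs.mp heq with h1 | h1
      · have : b ^ k = (b - 1) ^ k := by omega
        refine hne b (b - 1) ?_ this
        intro habs'
        rcases abs_eq_abs.mp habs' with h2 | h2 <;> omega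
      · refine hodd (b - 1) ?_
        have : (b - 1) + 1 = b := by ring
        rw [this]
        linarith
  · rintro ⟨h1, h2⟩ x
    set c := |b| with hc
    have hc0 : 0 ≤ c := abs_nonneg b
    have hbk : b ^ k = c ^ k := habs b
    -- translate the hypotheses to the nonnegative representative c
    have hA : |m - c ^ k| < |m - (c + 1) ^ k| := by
      rcases abs_choice b with hcb | hcb
      · have hcb' : c = b := hc.trans hcb
        have : (b + 1) ^ k = (c + 1) ^ k := by rw [hcb']
        rw [← hbk, ← this]; exact h1
      · have hcb' : c = -b := hc.trans hcb
        have : (b - 1) ^ k = (c + 1) ^ k := by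
          have : b - 1 = -(c + 1) := by omega
          rw [this, hke.neg_pow]
        rw [← hbk, ← this]; exact h2
    have hB : 1 ≤ c → |m - c ^ k| < |m - (c - 1) ^ k| := by
      intro hc1
      rcases abs_choice b with hcb | hcb
      · have hcb' : c = b := hc.trans hcb
        have : (b - 1) ^ k = (c - 1) ^ k := by rw [hcb']
        rw [← hbk, ← this]; exact h2
      · have hcb' : c = -b := hc.trans hcb
        have : (b + 1) ^ k = (c - 1) ^ k := by
          have : b + 1 = -(c - 1) := by omega
          rw [this, hke.neg_pow]
        rw [← hbk, ← this]; exact h1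
    have h2m : 2 * m < c ^ k + (c + 1) ^ k :=
      (key _ _ (hmono c (c + 1) hc0 (by omega))).mp hA
    -- reduce x to n = |x|
    have hxk : x ^ k = |x| ^ k := habs x
    set n := |x| with hn
    have hn0 : 0 ≤ n := abs_nonneg x
    rw [hbk, hxk]
    rcases lt_trichotomy n c with hlt | heq | hgt
    · -- n < c, so c ≥ 1
      have hc1 : 1 ≤ c := by omega
      have hB' := hB hc1
      have h2m' : (c - 1) ^ k + c ^ k < 2 * m :=
        (key2 _ _ (hmono (c - 1) c (by omega) (by omega))).mp hB'
      have hle : n ^ k ≤ (c - 1) ^ k := hmonole n (c - 1) hn0 (by omega)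
      have hlt' : n ^ k < c ^ k := hmono n c hn0 hlt
      exact le_of_lt ((key2 _ _ hlt').mpr (by omega))
    · rw [heq]
    · have hle : (c + 1) ^ k ≤ n ^ k := hmonole (c + 1) n (by omega) (by omega)
      have hlt' : c ^ k < n ^ k := hmono c n hc0 hgt
      exact le_of_lt ((key _ _ hlt').mpr (by omega))
end

section
/- If a, b are natural numbers, k is a positive even integer, m ≡ 3 (mod 4) is an integer, and |m − a^k| = |m − b^k|, then a = b. -/
lemma zmod8_aux : ∀ x y c : ZMod 8,
    (ZMod.castHom (show (4:ℕ) ∣ 8 by norm_num) (ZMod 4)) c = 3 → 2 * c ≠ x ^ 2 + y ^ 2 := by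
  decide

theorem nearest_kth_power_unique (a b : ℕ) (k : ℕ) (m : ℤ)
    (hk : 0 < k) (hke : Even k) (hm : m % 4 = 3)
    (h : |m - (a : ℤ) ^ k| = |m - (b : ℤ) ^ k|) : a = b := by
  rcases abs_eq_abs.1 h with h1 | h1
  · have : (a : ℤ) ^ k = (b : ℤ) ^ k := by linarith
    have hab : a ^ k = b ^ k := by exact_mod_cast this
    exact Nat.pow_left_injective hk.ne' hab
  · exfalso
    obtain ⟨j, hj⟩ := hke
    have key : 2 * m = (a : ℤ) ^ k + (b : ℤ) ^ k := by linarith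
    have hc4 : (ZMod.castHom (show (4:ℕ) ∣ 8 by norm_num) (ZMod 4)) (m : ZMod 8) = 3 := by
      have : ((m : ZMod 4) : ZMod 4) = ((3 : ℤ) : ZMod 4) := by
        rw [ZMod.intCast_eq_intCast_iff']
        simpa using hm
      simpa [ZMod.castHom_apply, ZMod.intCast_cast] using this
    apply zmod8_aux ((a : ZMod 8) ^ j) ((b : ZMod 8) ^ j) (m : ZMod 8) hc4
    have := congrArg (Int.cast : ℤ → ZMod 8) key
    push_cast at this
    rw [hj, pow_add, pow_add] at this
    rw [this]
    ring
end

section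
/- Let δ be a positive integer, ν ∈ ℕ, z₀, …, z_ν ∈ ℕ, and let P(z₀, …, z_ν) = Σ a_{i₀,…,i_ν} z₀^{i₀}⋯z_ν^{i_ν} (sum over i₀ + ⋯ + i_ν ≤ δ) with integer coefficients satisfying |a_{i₀,…,i_ν}| ≤ L for a positive integer L. Define C(x) = (1 + Σ_{i=0}^ν zᵢ x^{(δ+1)^i})^δ and D(x) = Σ i₀!⋯i_ν!(δ−i₀−⋯−i_ν)! a_{i₀,…,i_ν} x^{(δ+1)^{ν+1} − Σ_j i_j(δ+1)^j}. Let B be an integer with B > 2(1 + z₀ + ⋯ + z_ν)^δ δ! L. Then the coefficient of x^{(δ+1)^{ν+1}} in the polynomial C(x)D(x) equals δ!·P(z₀, …, z_ν), and every coefficient of C(x)D(x) has absolute value less than B/2. -/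
open Polynomial Finset

private lemma digits_lt {n m : ℕ} (i : Fin n → Fin m) :
    ∑ j, (i j : ℕ) * m ^ (j : ℕ) < m ^ n := by
  rw [← finFunctionFinEquiv_apply]
  exact (finFunctionFinEquiv i).is_lt

private lemma digits_inj {n m : ℕ} (i i' : Fin n → Fin m)
    (h : ∑ j, (i j : ℕ) * m ^ (j : ℕ) = ∑ j, (i' j : ℕ) * m ^ (j : ℕ)) : i = i' := by
  apply finFunctionFinEquiv.injective
  apply Fin.val_injective
  rwa [finFunctionFinEquiv_apply, finFunctionFinEquiv_apply]

private lemma C_expand (δ ν : ℕ) (z : Fin (ν+1) → ℕ) :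
    (1 + ∑ j : Fin (ν+1), Polynomial.C (z j : ℤ) * X ^ ((δ+1) ^ (j : ℕ))) ^ δ =
      ∑ k ∈ Finset.piAntidiag (Finset.univ : Finset (Option (Fin (ν+1)))) δ,
        Polynomial.C ((Nat.multinomial Finset.univ k : ℤ) *
            ∏ j : Fin (ν+1), (z j : ℤ) ^ k (some j)) *
          X ^ (∑ j : Fin (ν+1), k (some j) * (δ+1) ^ (j : ℕ)) := by
  have h1 : (1 + ∑ j : Fin (ν+1), Polynomial.C (z j : ℤ) * X ^ ((δ+1) ^ (j : ℕ)))
      = ∑ t : Option (Fin (ν+1)),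
          Option.elim t 1 (fun j => Polynomial.C (z j : ℤ) * X ^ ((δ+1) ^ (j : ℕ))) := by
    rw [Fintype.sum_option]
    rfl
  rw [h1, Finset.sum_pow_eq_sum_piAntidiag]
  refine Finset.sum_congr rfl fun k hk => ?_
  rw [Fintype.prod_option]
  show _ * ((1:ℤ[X]) ^ k none * _) = _
  rw [one_pow, one_mul]
  simp only [Option.elim_some]
  simp_rw [mul_pow, ← Polynomial.C_pow, ← pow_mul]
  rw [Finset.prod_mul_distrib, ← map_prod, Finset.prod_pow_eq_pow_sum]
  rw [map_mul, ← mul_assoc]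
  congr 2
  exact Finset.sum_congr rfl fun j _ => mul_comm _ _

open Polynomial in
theorem coeff_CD_and_bound (δ ν : ℕ) (hδ : 0 < δ) (L : ℤ) (hL : 0 < L)
    (z : Fin (ν+1) → ℕ)
    (a : (Fin (ν+1) → Fin (δ+1)) → ℤ)
    (ha0 : ∀ i, δ < ∑ j, (i j : ℕ) → a i = 0)
    (haL : ∀ i, |a i| ≤ L)
    (B : ℤ)
    (hB : 2 * (1 + ∑ j, (z j : ℤ)) ^ δ * (Nat.factorial δ : ℤ) * L < B)
    (C D : ℤ[X])
    (hC : C = (1 + ∑ j : Fin (ν+1), Polynomial.C (z j : ℤ) * X ^ ((δ+1) ^ (j : ℕ))) ^ δ)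
    (hD : D = ∑ i : Fin (ν+1) → Fin (δ+1),
        Polynomial.C (((∏ j, Nat.factorial (i j)) *
            Nat.factorial (δ - ∑ j, (i j : ℕ)) : ℕ) * a i) *
          X ^ ((δ+1) ^ (ν+1) - ∑ j : Fin (ν+1), (i j : ℕ) * (δ+1) ^ (j : ℕ))) :
    (C * D).coeff ((δ+1) ^ (ν+1)) =
      (Nat.factorial δ : ℤ) *
        ∑ i : Fin (ν+1) → Fin (δ+1), a i * ∏ j, (z j : ℤ) ^ (i j : ℕ) ∧
    ∀ k : ℕ, 2 * |(C * D).coeff k| < B := by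
  set N := (δ+1) ^ (ν+1) with hN
  set s : (Fin (ν+1) → Fin (δ+1)) → ℕ :=
    fun i => ∑ j, (i j : ℕ) * (δ+1) ^ (j : ℕ) with hsdef
  have hsltN : ∀ i, s i < N := fun i => digits_lt i
  -- coefficients of C
  have hCco : ∀ n, C.coeff n =
      ∑ k ∈ Finset.piAntidiag (Finset.univ : Finset (Option (Fin (ν+1)))) δ,
        if n = ∑ j : Fin (ν+1), k (some j) * (δ+1) ^ (j : ℕ) then
          (Nat.multinomial Finset.univ k : ℤ) * ∏ j : Fin (ν+1), (z j : ℤ) ^ k (some j)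
        else 0 := by
    intro n
    rw [hC, C_expand, Polynomial.finset_sum_coeff]
    exact Finset.sum_congr rfl fun k _ => Polynomial.coeff_C_mul_X_pow _ _ _
  have hCnonneg : ∀ n, 0 ≤ C.coeff n := by
    intro n
    rw [hCco]
    refine Finset.sum_nonneg fun k _ => ?_
    split
    · positivity
    · exact le_rfl
  -- extension of i to Option
  set ki : (Fin (ν+1) → Fin (δ+1)) → Option (Fin (ν+1)) → ℕ :=
    fun i t => Option.elim t (δ - ∑ j, (i j : ℕ)) (fun j => (i j : ℕ)) with hkidef
  have hki_sum : ∀ i, (∑ j, (i j : ℕ)) ≤ δ →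
      ∑ t : Option (Fin (ν+1)), ki i t = δ := by
    intro i hle
    rw [Fintype.sum_option]
    simp only [hkidef, Option.elim_some, Option.elim_none]
    omega
  have hCval : ∀ i : Fin (ν+1) → Fin (δ+1), (∑ j, (i j : ℕ)) ≤ δ →
      C.coeff (s i) = (Nat.multinomial Finset.univ (ki i) : ℤ) *
        ∏ j : Fin (ν+1), (z j : ℤ) ^ (i j : ℕ) := by
    intro i hle
    rw [hCco]
    rw [Finset.sum_eq_single_of_mem (ki i) ?_ ?_]
    · rw [if_pos (by simp only [hkidef, Option.elim_some, hsdef])]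
      simp only [hkidef, Option.elim_some]
    · rw [Finset.mem_piAntidiag]
      exact ⟨hki_sum i hle, fun t _ => Finset.mem_univ t⟩
    · intro k hk hne
      rw [Finset.mem_piAntidiag] at hk
      rw [if_neg]
      intro heq
      -- each k (some j) ≤ δ
      have hbd : ∀ j : Fin (ν+1), k (some j) < δ + 1 := fun j =>
        Nat.lt_succ_of_le (le_trans (Finset.single_le_sum (f := k)
          (fun t _ => Nat.zero_le _) (Finset.mem_univ (some j))) (le_of_eq hk.1))
      set k' : Fin (ν+1) → Fin (δ+1) := fun j => ⟨k (some j), hbd j⟩ with hk'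
      have : k' = i := by
        apply digits_inj
        exact heq.symm
      apply hne
      funext t
      cases t with
      | none =>
        have h2 : ∑ t : Option (Fin (ν+1)), k t = δ := hk.1
        rw [Fintype.sum_option] at h2
        have h3 : ∀ j, k (some j) = (i j : ℕ) := by
          intro j
          have := congrFun this j
          exact congrArg Fin.val this
        simp only [h3] at h2
        show k none = δ - ∑ j, (i j : ℕ)
        omega
      | some j =>
        have := congrFun this j
        exact congrArg Fin.val this
  -- multinomial * factorials = δ!
  have hMmul : ∀ i : Fin (ν+1) → Fin (δ+1), (∑ j, (i j : ℕ)) ≤ δ →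
      ((∏ j, Nat.factorial (i j)) * Nat.factorial (δ - ∑ j, (i j : ℕ))) *
        Nat.multinomial Finset.univ (ki i) = Nat.factorial δ := by
    intro i hle
    have hspec := Nat.multinomial_spec (s := (Finset.univ : Finset (Option (Fin (ν+1))))) (f := ki i)
    rw [hki_sum i hle] at hspec
    rw [← hspec]
    congr 1
    rw [Fintype.prod_option]
    simp only [hkidef, Option.elim_some, Option.elim_none]
    ring
  -- coefficients of D
  have hDco : ∀ n, D.coeff n =
      ∑ i : Fin (ν+1) → Fin (δ+1),
        if n = N - s i then
          (((∏ j, Nat.factorial (i j)) * Nat.factorial (δ - ∑ j, (i j : ℕ)) : ℕ) : ℤ) * a i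
        else 0 := by
    intro n
    rw [hD, Polynomial.finset_sum_coeff]
    exact Finset.sum_congr rfl fun i _ => Polynomial.coeff_C_mul_X_pow _ _ _
  have hMle : ∀ i : Fin (ν+1) → Fin (δ+1),
      |(((∏ j, Nat.factorial (i j)) * Nat.factorial (δ - ∑ j, (i j : ℕ)) : ℕ) : ℤ) * a i|
        ≤ (Nat.factorial δ : ℤ) * L := by
    intro i
    by_cases hle : (∑ j, (i j : ℕ)) ≤ δ
    · rw [abs_mul, Nat.abs_cast]
      have h1 : (((∏ j, Nat.factorial (i j)) * Nat.factorial (δ - ∑ j, (i j : ℕ)) : ℕ) : ℤ)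
          ≤ (Nat.factorial δ : ℤ) := by
        have := hMmul i hle
        have hpos := Nat.multinomial_pos (s := (Finset.univ : Finset (Option (Fin (ν+1))))) (f := ki i)
        exact_mod_cast Nat.le_of_dvd (Nat.factorial_pos δ) ⟨_, (hMmul i hle).symm⟩
      exact mul_le_mul h1 (haL i) (abs_nonneg _) (by positivity)
    · rw [ha0 i (lt_of_not_ge hle), mul_zero, abs_zero]
      positivity
  have hDbound : ∀ n, |D.coeff n| ≤ (Nat.factorial δ : ℤ) * L := by
    intro n
    rw [hDco]
    by_cases hex : ∃ i, n = N - s i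
    · obtain ⟨i₀, hi₀⟩ := hex
      rw [Finset.sum_eq_single_of_mem i₀ (Finset.mem_univ i₀) ?_]
      · rw [if_pos hi₀]
        exact hMle i₀
      · intro i _ hne
        rw [if_neg]
        intro hn
        apply hne
        apply digits_inj
        have h1 : N - s i = N - s i₀ := by omega
        have := hsltN i
        have := hsltN i₀
        have : s i = s i₀ := by omega
        exact this
    · rw [Finset.sum_eq_zero fun i _ => if_neg fun h => hex ⟨i, h⟩, abs_zero]
      positivity
  constructor
  · -- main coefficient computation
    rw [hD, Finset.mul_sum, Polynomial.finset_sum_coeff]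
    have hterm : ∀ i : Fin (ν+1) → Fin (δ+1),
        (C * (Polynomial.C ((((∏ j, Nat.factorial (i j)) *
              Nat.factorial (δ - ∑ j, (i j : ℕ)) : ℕ) : ℤ) * a i) * X ^ (N - s i))).coeff N =
          C.coeff (s i) * ((((∏ j, Nat.factorial (i j)) *
              Nat.factorial (δ - ∑ j, (i j : ℕ)) : ℕ) : ℤ) * a i) := by
      intro i
      rw [← mul_assoc, Polynomial.coeff_mul_X_pow', if_pos (Nat.sub_le _ _),
        Polynomial.coeff_mul_C, Nat.sub_sub_self (le_of_lt (hsltN i))]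
    rw [Finset.sum_congr rfl fun i _ => hterm i, Finset.mul_sum]
    refine Finset.sum_congr rfl fun i _ => ?_
    by_cases hle : (∑ j, (i j : ℕ)) ≤ δ
    · rw [hCval i hle]
      have hmm : ((((∏ j, Nat.factorial (i j)) * Nat.factorial (δ - ∑ j, (i j : ℕ))) *
          Nat.multinomial Finset.univ (ki i) : ℕ) : ℤ) = (Nat.factorial δ : ℤ) := by
        exact_mod_cast congrArg Nat.cast (hMmul i hle)
      push_cast at hmm ⊢
      linear_combination (a i * ∏ j, (z j : ℤ) ^ (i j : ℕ)) * hmm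
    · rw [ha0 i (lt_of_not_ge hle), mul_zero, mul_zero, zero_mul, mul_zero]
  · -- bound
    intro k
    have hrange : ∑ m ∈ Finset.range (k+1), C.coeff m ≤ C.eval 1 := by
      have hlt : C.natDegree < max (k+1) (C.natDegree + 1) := lt_of_lt_of_le (Nat.lt_succ_self _) (le_max_right _ _)
      rw [Polynomial.eval_eq_sum_range' hlt]
      simp only [one_pow, mul_one]
      exact Finset.sum_le_sum_of_subset_of_nonneg
        (Finset.range_subset_range.mpr (le_max_left _ _)) (fun m _ _ => hCnonneg m)
    have hCeval : C.eval 1 = (1 + ∑ j, (z j : ℤ)) ^ δ := by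
      simp [hC, Polynomial.eval_finset_sum]
    have h1 : |(C * D).coeff k| ≤ (1 + ∑ j, (z j : ℤ)) ^ δ * ((Nat.factorial δ : ℤ) * L) := by
      rw [Polynomial.coeff_mul]
      calc |∑ x ∈ Finset.HasAntidiagonal.antidiagonal k, C.coeff x.1 * D.coeff x.2|
          ≤ ∑ x ∈ Finset.HasAntidiagonal.antidiagonal k, |C.coeff x.1 * D.coeff x.2| :=
            Finset.abs_sum_le_sum_abs _ _
        _ ≤ ∑ x ∈ Finset.HasAntidiagonal.antidiagonal k, C.coeff x.1 * ((Nat.factorial δ : ℤ) * L) := by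
            refine Finset.sum_le_sum fun x _ => ?_
            rw [abs_mul, abs_of_nonneg (hCnonneg _)]
            exact mul_le_mul_of_nonneg_left (hDbound _) (hCnonneg _)
        _ = (∑ m ∈ Finset.range (k+1), C.coeff m) * ((Nat.factorial δ : ℤ) * L) := by
            rw [Finset.Nat.sum_antidiagonal_eq_sum_range_succ_mk, ← Finset.sum_mul]
        _ ≤ C.eval 1 * ((Nat.factorial δ : ℤ) * L) := by
            refine mul_le_mul_of_nonneg_right hrange (by positivity)
        _ = (1 + ∑ j, (z j : ℤ)) ^ δ * ((Nat.factorial δ : ℤ) * L) := by rw [hCeval]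
    calc 2 * |(C * D).coeff k| ≤ 2 * ((1 + ∑ j, (z j : ℤ)) ^ δ * ((Nat.factorial δ : ℤ) * L)) := by
          linarith
      _ = 2 * (1 + ∑ j, (z j : ℤ)) ^ δ * (Nat.factorial δ : ℤ) * L := by ring
      _ < B := hB
end

section
/- For any integers S ≠ 0, T, and A₁, …, A_k: all of A₁, …, A_k are perfect squares and S divides T, if and only if there exists an integer x such that S^{2^k} · J_k(A₁, …, A_k, x + T/S) = 0, where J_k(x₁,…,x_k, x) = ∏_{ε₁,…,ε_k ∈ {±1}} (x + ε₁√x₁ + ε₂√x₂·X + ⋯ + ε_k√x_k·X^{k−1}) with X = 1 + Σ_{j=1}^k x_j², a polynomial with integer coefficients. -/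
open Finset Polynomial IntermediateField

/-- The Matiyasevich–Robinson polynomial `J_k`, evaluated via a choice of
complex square roots `s j` of the `A j` (the value is independent of the
choice of signs, and equals the value of the integer-coefficient polynomial
`J_k(A₁,…,A_k, x)`). -/
noncomputable def MRJ (k : ℕ) (A : Fin k → ℤ) (s : Fin k → ℂ) (x : ℂ) : ℂ :=
  ∏ ε : Fin k → Bool,
    (x + ∑ j : Fin k, (if ε j then (1 : ℂ) else -1) * s j *
      ((1 : ℂ) + ∑ l : Fin k, ((A l : ℂ)) ^ 2) ^ (j : ℕ))



noncomputable def Complex.abs : AbsoluteValue ℂ ℝ where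
  toFun := fun z => ‖z‖
  map_mul' := norm_mul
  nonneg' := norm_nonneg
  eq_zero' := fun _ => norm_eq_zero
  add_le' := norm_add_le

lemma Complex.abs_intCast (n : ℤ) : Complex.abs (n : ℂ) = |(n : ℝ)| := Complex.norm_intCast n

@[simp]
lemma Complex.abs_ofNat : Complex.abs (2 : ℂ) = (2 : ℝ) := by
  show ‖(2 : ℂ)‖ = 2
  norm_num

lemma MRJ_digit_aux {k : ℕ} {X : ℤ} (hX : 2 ≤ X) (d : Fin k → ℂ)
    (hlow : ∀ j, d j ≠ 0 → 2 ≤ Complex.abs (d j))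
    (hhigh : ∀ j, Complex.abs (d j) ≤ 2 * ((X : ℝ) - 1))
    (hsum : ∑ j : Fin k, d j * (X : ℂ) ^ (j : ℕ) = 0) :
    ∀ j, d j = 0 := by
  by_contra hcon
  push_neg at hcon
  obtain ⟨j1, hj1⟩ := hcon
  classical
  set Tset := Finset.univ.filter (fun j => d j ≠ 0) with hT
  have hTne : Tset.Nonempty := ⟨j1, by simp [hT, hj1]⟩
  set J := Tset.max' hTne with hJ
  have hJmem : J ∈ Tset := Tset.max'_mem hTne
  have hdJ : d J ≠ 0 := by simpa [hT] using hJmem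
  have hXR : (2:ℝ) ≤ (X:ℝ) := by exact_mod_cast hX
  have hXpos : (0:ℝ) < (X:ℝ) := by linarith
  have hsum' : ∑ j ∈ Tset, d j * (X:ℂ)^(j:ℕ) = 0 := by
    rw [← hsum]
    apply Finset.sum_subset (Finset.subset_univ _)
    intro x _ hx
    simp only [hT, Finset.mem_filter, Finset.mem_univ, true_and, not_not] at hx
    simp [hx]
  have hsplit : d J * (X:ℂ)^(J:ℕ) = - ∑ j ∈ Tset.erase J, d j * (X:ℂ)^(j:ℕ) := by
    have h := Finset.add_sum_erase Tset (fun j => d j * (X:ℂ)^(j:ℕ)) hJmem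
    rw [hsum'] at h
    linear_combination h
  have hXabs : Complex.abs ((X:ℂ)) = (X:ℝ) := by
    rw [Complex.abs_intCast]
    exact abs_of_nonneg (by linarith)
  have hsub : (Tset.erase J).image Fin.val ⊆ Finset.range (J:ℕ) := by
    intro i hi
    rw [Finset.mem_image] at hi
    obtain ⟨j, hj, rfl⟩ := hi
    rw [Finset.mem_range]
    have h1 : j ≤ J := Finset.le_max' _ _ (Finset.mem_of_mem_erase hj)
    have h2 : j ≠ J := Finset.ne_of_mem_erase hj
    exact lt_of_le_of_ne h1 (fun h => h2 (Fin.ext h))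
  have habs : Complex.abs (d J) * (X:ℝ)^(J:ℕ) ≤ 2 * ((X:ℝ)^(J:ℕ) - 1) := by
    calc Complex.abs (d J) * (X:ℝ)^(J:ℕ)
        = Complex.abs (d J * (X:ℂ)^(J:ℕ)) := by rw [map_mul, map_pow, hXabs]
      _ = Complex.abs (∑ j ∈ Tset.erase J, d j * (X:ℂ)^(j:ℕ)) := by
          rw [hsplit, AbsoluteValue.map_neg]
      _ ≤ ∑ j ∈ Tset.erase J, Complex.abs (d j * (X:ℂ)^(j:ℕ)) :=
          Complex.abs.sum_le _ _
      _ = ∑ j ∈ Tset.erase J, Complex.abs (d j) * (X:ℝ)^(j:ℕ) := by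
          simp [map_mul, map_pow, hXabs]
      _ ≤ ∑ j ∈ Tset.erase J, (2*((X:ℝ)-1)) * (X:ℝ)^(j:ℕ) := by
          refine Finset.sum_le_sum (fun j _ => ?_)
          exact mul_le_mul_of_nonneg_right (hhigh j) (pow_nonneg (le_of_lt hXpos) _)
      _ = ∑ i ∈ (Tset.erase J).image Fin.val, (2*((X:ℝ)-1)) * (X:ℝ)^i := by
          rw [Finset.sum_image (fun a _ b _ h => Fin.ext h)]
      _ ≤ ∑ i ∈ Finset.range (J:ℕ), (2*((X:ℝ)-1)) * (X:ℝ)^i := by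
          refine Finset.sum_le_sum_of_subset_of_nonneg hsub (fun i _ _ => ?_)
          have : (0:ℝ) ≤ (X:ℝ)^i := pow_nonneg (le_of_lt hXpos) _
          nlinarith
      _ = 2 * ((X:ℝ)^(J:ℕ) - 1) := by
          rw [← Finset.mul_sum]
          have h := geom_sum_mul (X:ℝ) (J:ℕ)
          linear_combination 2 * h
  have h2 : 2 ≤ Complex.abs (d J) := hlow J hdJ
  have h3 : (0:ℝ) < (X:ℝ)^(J:ℕ) := pow_pos hXpos _
  nlinarith



lemma rat_sq_is_int {r : ℚ} {A : ℤ} (h : r ^ 2 = (A : ℚ)) : ∃ m : ℤ, r = (m : ℚ) := by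
  have hint : IsIntegral ℤ r := by
    refine ⟨Polynomial.X ^ 2 - Polynomial.C A, Polynomial.monic_X_pow_sub_C A (by norm_num), ?_⟩
    rw [Polynomial.eval₂_sub, Polynomial.eval₂_pow, Polynomial.eval₂_X, Polynomial.eval₂_C]; simp [h]
  obtain ⟨m, hm⟩ := IsIntegrallyClosed.isIntegral_iff.mp hint
  exact ⟨m, hm.symm⟩




lemma MRJ_key {k : ℕ} (A : Fin k → ℤ) (c : Fin k → ℂ)
    (hc : ∀ j, c j ^ 2 = (A j : ℂ)) (q : ℚ)
    (hsum : ∑ j : Fin k, c j * (((1 + ∑ l : Fin k, (A l) ^ 2 : ℤ)) : ℂ) ^ (j : ℕ) = (q : ℂ)) :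
    ∀ j, ∃ r : ℚ, c j = (r : ℂ) := by
  classical
  set X₀ : ℤ := 1 + ∑ l : Fin k, (A l) ^ 2 with hX₀
  by_contra hcon
  push_neg at hcon
  obtain ⟨j0, hj0⟩ := hcon
  have hc0 : c j0 ≠ 0 := fun h => hj0 0 (by simp [h])
  have hA0 : A j0 ≠ 0 := by
    intro h
    have := hc j0
    rw [h] at this
    simp at this
    exact hc0 this
  have hAsq : ∀ j, (1:ℤ) ≤ (A j)^2 → True := fun _ _ => trivial
  have hbound : ∀ j, (A j)^2 ≤ X₀ - 1 := by
    intro j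
    have : (A j)^2 ≤ ∑ l : Fin k, (A l)^2 :=
      Finset.single_le_sum (fun l _ => sq_nonneg (A l)) (Finset.mem_univ j)
    omega
  have hX2 : 2 ≤ X₀ := by
    have h1 : (1:ℤ) ≤ (A j0)^2 := by nlinarith [Int.one_le_abs hA0, sq_abs (A j0), abs_nonneg (A j0)]
    have := hbound j0
    omega
  -- integrality
  have hint : ∀ j, IsIntegral ℚ (c j) := by
    intro j
    refine ⟨Polynomial.X ^ 2 - Polynomial.C ((A j : ℚ)), ?_, ?_⟩
    · exact Polynomial.monic_X_pow_sub_C _ (by norm_num)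
    · rw [Polynomial.eval₂_sub, Polynomial.eval₂_pow, Polynomial.eval₂_X, Polynomial.eval₂_C]
      rw [hc j]
      simp
  -- minimal polynomial
  have hirr : Irreducible (Polynomial.X ^ 2 - Polynomial.C ((A j0 : ℚ))) := by
    apply X_pow_sub_C_irreducible_of_prime Nat.prime_two
    intro b hb
    have hb' : (b:ℂ)^2 = (A j0 : ℂ) := by
      have := congrArg (fun t : ℚ => (t : ℂ)) hb
      push_cast at this
      exact this
    have : (c j0 - b) * (c j0 + b) = 0 := by
      have := hc j0
      linear_combination this - hb'
    rcases mul_eq_zero.mp this with h | h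
    · exact hj0 b (by linear_combination h)
    · exact hj0 (-b) (by push_cast; linear_combination h)
  have hmp : minpoly ℚ (c j0) = Polynomial.X ^ 2 - Polynomial.C ((A j0 : ℚ)) := by
    have haev : Polynomial.aeval (c j0) (Polynomial.X ^ 2 - Polynomial.C ((A j0 : ℚ))) = 0 := by
      rw [map_sub, map_pow, Polynomial.aeval_X, Polynomial.aeval_C, hc j0]
      simp
    exact (minpoly.eq_of_irreducible_of_monic hirr haev
      (Polynomial.monic_X_pow_sub_C _ (by norm_num))).symm
  -- embedding sending c j0 to -c j0
  have hroot : -c j0 ∈ (minpoly ℚ (c j0)).aroots ℂ := by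
    rw [hmp, Polynomial.mem_aroots]
    refine ⟨Polynomial.X_pow_sub_C_ne_zero (by norm_num) _, ?_⟩
    rw [map_sub, map_pow, Polynomial.aeval_X, Polynomial.aeval_C, neg_pow]
    simp [hc j0]
  let f : ℚ⟮c j0⟯ →ₐ[ℚ] ℂ := (algHomAdjoinIntegralEquiv ℚ (hint j0)).symm ⟨-c j0, hroot⟩
  have hfgen : f (AdjoinSimple.gen ℚ (c j0)) = -c j0 :=
    algHomAdjoinIntegralEquiv_symm_apply_gen ℚ (hint j0) _
  have hL : ℚ⟮c j0⟯ ≤ adjoin ℚ (Set.range c) := by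
    rw [adjoin_simple_le_iff]
    exact subset_adjoin ℚ _ ⟨j0, rfl⟩
  obtain ⟨φ, hφ⟩ := exists_algHom_adjoin_of_splits
    (fun x hx => ⟨by obtain ⟨j, rfl⟩ := hx; exact hint j, IsAlgClosed.splits _⟩) f hL
  let cL : Fin k → adjoin ℚ (Set.range c) := fun j => ⟨c j, subset_adjoin ℚ _ ⟨j, rfl⟩⟩
  have hφj0 : φ (cL j0) = -c j0 := by
    have h1 : (inclusion hL) (AdjoinSimple.gen ℚ (c j0)) = cL j0 := rfl
    rw [← h1, ← AlgHom.comp_apply, hφ]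
    exact hfgen
  have hφsq : ∀ j, φ (cL j) = c j ∨ φ (cL j) = -c j := by
    intro j
    have h3 : (cL j)^2 = ((A j : ℤ) : adjoin ℚ (Set.range c)) := by
      apply Subtype.ext
      push_cast
      exact hc j
    have h2 : (φ (cL j))^2 = (A j : ℂ) := by
      rw [← map_pow, h3, map_intCast]
    have h4 : (φ (cL j) - c j) * (φ (cL j) + c j) = 0 := by
      linear_combination h2 - hc j
    rcases mul_eq_zero.mp h4 with h | h
    · left; linear_combination h
    · right; linear_combination h
  have hEL : ∑ j : Fin k, cL j * ((X₀ : ℤ) : adjoin ℚ (Set.range c)) ^ (j:ℕ) = ((q : ℚ) : adjoin ℚ (Set.range c)) := by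
    have hinj : Function.Injective ((adjoin ℚ (Set.range c)).val) :=
      RingHom.injective ((adjoin ℚ (Set.range c)).val : adjoin ℚ (Set.range c) →+* ℂ)
    apply hinj
    rw [map_sum, map_ratCast]
    simp only [map_mul, map_pow, map_intCast]
    exact hsum
  have hEφ := congrArg φ hEL
  rw [map_sum, map_ratCast] at hEφ
  simp only [map_mul, map_pow, map_intCast] at hEφ
  set d : Fin k → ℂ := fun j => c j - φ (cL j) with hd
  have hdsum : ∑ j : Fin k, d j * ((X₀:ℤ):ℂ) ^ (j:ℕ) = 0 := by
    simp only [hd, sub_mul]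
    rw [Finset.sum_sub_distrib, hsum, hEφ]
    ring
  have hcabs : ∀ j, Complex.abs (c j) ^ 2 = |(A j : ℝ)| := by
    intro j
    rw [← map_pow, hc j, Complex.abs_intCast]
  have hlow : ∀ j, d j ≠ 0 → 2 ≤ Complex.abs (d j) := by
    intro j hdj
    rcases hφsq j with h | h
    · exact absurd (by simp [hd, h]) hdj
    · have hdeq : d j = 2 * c j := by simp [hd, h]; ring
      have hcj : c j ≠ 0 := by
        intro h0; exact hdj (by simp [hdeq, h0])
      have hAj : A j ≠ 0 := by
        intro h0
        have := hc j
        rw [h0] at this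
        simp at this
        exact hcj this
      have h1 : (1:ℝ) ≤ |(A j : ℝ)| := by
        have := Int.one_le_abs hAj
        have : ((1:ℤ):ℝ) ≤ ((|A j|:ℤ):ℝ) := by exact_mod_cast this
        simpa using this
      have h2 : Complex.abs (c j) ^ 2 = |(A j : ℝ)| := hcabs j
      have h3 : (1:ℝ) ≤ Complex.abs (c j) := by nlinarith [AbsoluteValue.nonneg Complex.abs (c j)]
      rw [hdeq, map_mul]
      simp only [Complex.abs_ofNat]
      nlinarith
  have hhigh : ∀ j, Complex.abs (d j) ≤ 2 * (((X₀:ℤ):ℝ) - 1) := by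
    intro j
    have hX1 : (1:ℝ) ≤ ((X₀:ℤ):ℝ) - 1 := by
      have : (2:ℤ) ≤ X₀ := hX2
      have : (2:ℝ) ≤ ((X₀:ℤ):ℝ) := by exact_mod_cast this
      linarith
    rcases hφsq j with h | h
    · simp [hd, h]
      linarith
    · have hdeq : d j = 2 * c j := by simp [hd, h]; ring
      have h2 : Complex.abs (c j) ^ 2 = |(A j : ℝ)| := hcabs j
      have hb1 : |(A j : ℝ)| ≤ ((X₀:ℤ):ℝ) - 1 := by
        have hb : (A j)^2 ≤ X₀ - 1 := hbound j
        have hb' : ((A j:ℝ))^2 ≤ ((X₀:ℤ):ℝ) - 1 := by exact_mod_cast hb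
        have habs' : |(A j:ℝ)| ≤ |(A j:ℝ)|^2 ∨ |(A j:ℝ)| ≤ 1 := by
          rcases le_or_gt |(A j:ℝ)| 1 with hle | hlt
          · right; exact hle
          · left; nlinarith [abs_nonneg ((A j:ℝ))]
        rcases habs' with hle | hle
        · calc |(A j:ℝ)| ≤ |(A j:ℝ)|^2 := hle
            _ = ((A j:ℝ))^2 := sq_abs _
            _ ≤ ((X₀:ℤ):ℝ) - 1 := hb'
        · linarith
      have h3 : Complex.abs (c j) ≤ ((X₀:ℤ):ℝ) - 1 := by
        nlinarith [AbsoluteValue.nonneg Complex.abs (c j)]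
      rw [hdeq, map_mul]
      simp only [Complex.abs_ofNat]
      nlinarith
  have hdz := MRJ_digit_aux hX2 d hlow hhigh hdsum
  have := hdz j0
  rw [hd] at this
  simp only [hφj0] at this
  apply hc0
  have h2c : (2:ℂ) * c j0 = 0 := by linear_combination this
  have : (2:ℂ) ≠ 0 := by norm_num
  exact (mul_eq_zero.mp h2c).resolve_left this






theorem all_squares_and_dvd_iff_MRJ_shifted_root (k : ℕ) (A : Fin k → ℤ)
    (S T : ℤ) (hS : S ≠ 0)
    (s : Fin k → ℂ) (hs : ∀ j, s j ^ 2 = (A j : ℂ)) :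
    ((∀ j, ∃ m : ℤ, A j = m ^ 2) ∧ S ∣ T) ↔
      ∃ x : ℤ, (S : ℂ) ^ (2 ^ k) * MRJ k A s ((x : ℂ) + (T : ℂ) / (S : ℂ)) = 0 := by
  classical
  have hSc : (S : ℂ) ≠ 0 := by exact_mod_cast hS
  have hXc : ((1 + ∑ l : Fin k, (A l) ^ 2 : ℤ) : ℂ) = (1 : ℂ) + ∑ l : Fin k, ((A l : ℂ)) ^ 2 := by
    push_cast
    ring
  constructor
  · rintro ⟨hsq, t, rfl⟩
    choose m hm using hsq
    have hsn : ∀ j, ∃ n : ℤ, (n : ℂ) = s j := by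
      intro j
      have h1 : (s j - (m j : ℂ)) * (s j + (m j : ℂ)) = 0 := by
        have h2 := hs j
        rw [hm j] at h2
        push_cast at h2
        linear_combination h2
      rcases mul_eq_zero.mp h1 with h | h
      · exact ⟨m j, by linear_combination -h⟩
      · exact ⟨-(m j), by push_cast; linear_combination -h⟩
    choose n hn using hsn
    set X₀ : ℤ := 1 + ∑ l : Fin k, (A l) ^ 2 with hX₀
    set N : ℤ := ∑ j : Fin k, n j * X₀ ^ (j : ℕ) with hN
    refine ⟨-t - N, ?_⟩
    rw [mul_eq_zero]
    right
    rw [MRJ]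
    apply Finset.prod_eq_zero (Finset.mem_univ (fun _ => true))
    have hTS : ((S * t : ℤ) : ℂ) / (S : ℂ) = (t : ℂ) := by
      push_cast
      field_simp
    rw [hTS]
    have : ∑ j : Fin k, (if (fun _ => true) j then (1:ℂ) else -1) * s j *
        ((1 : ℂ) + ∑ l : Fin k, ((A l : ℂ)) ^ 2) ^ (j : ℕ) = (N : ℂ) := by
      rw [hN]
      push_cast
      rw [← hXc]
      refine Finset.sum_congr rfl (fun j _ => ?_)
      rw [if_pos rfl, one_mul, ← hn j]
    rw [this]
    push_cast
    ring
  · rintro ⟨x, hx⟩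
    rw [mul_eq_zero] at hx
    rcases hx with h | h
    · exact absurd (pow_eq_zero_iff (by positivity) |>.mp h) hSc
    rw [MRJ, Finset.prod_eq_zero_iff] at h
    obtain ⟨ε, -, hε⟩ := h
    set c : Fin k → ℂ := fun j => (if ε j then (1:ℂ) else -1) * s j with hcdef
    have hc : ∀ j, c j ^ 2 = (A j : ℂ) := by
      intro j
      rw [hcdef]
      simp only
      rw [mul_pow]
      rcases Bool.dichotomy (ε j) with h' | h' <;> rw [h'] <;> simp [hs j]
    set q : ℚ := -(x : ℚ) - (T : ℚ) / (S : ℚ) with hq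
    have hsum : ∑ j : Fin k, c j * (((1 + ∑ l : Fin k, (A l) ^ 2 : ℤ)) : ℂ) ^ (j : ℕ) = (q : ℂ) := by
      rw [hXc, hq]
      push_cast
      linear_combination hε
    have hr := MRJ_key A c hc q hsum
    choose r hr using hr
    have hrsq : ∀ j, (r j) ^ 2 = ((A j : ℚ)) := by
      intro j
      have h1 : ((r j : ℂ)) ^ 2 = ((A j : ℚ) : ℂ) := by
        rw [← hr j, hc j]
        push_cast
        ring
      exact_mod_cast h1
    have hmint : ∀ j, ∃ m : ℤ, r j = (m : ℚ) := fun j => rat_sq_is_int (hrsq j)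
    choose m hm using hmint
    constructor
    · intro j
      refine ⟨m j, ?_⟩
      have := hrsq j
      rw [hm j] at this
      exact_mod_cast this.symm
    · -- divisibility
      set X₀ : ℤ := 1 + ∑ l : Fin k, (A l) ^ 2 with hX₀
      set N : ℤ := ∑ j : Fin k, m j * X₀ ^ (j : ℕ) with hN
      have hNq : ((N : ℤ) : ℚ) = q := by
        have h1 : ((N : ℤ) : ℂ) = (q : ℂ) := by
          rw [← hsum, hN]
          push_cast
          refine (Finset.sum_congr rfl (fun j _ => ?_)).symm
          rw [hr j, hm j]
          push_cast
          ring
        exact_mod_cast h1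
      have hq2 : (T : ℚ) = ((S * (-x - N) : ℤ) : ℚ) := by
        rw [hq] at hNq
        have hSq : (S : ℚ) ≠ 0 := by exact_mod_cast hS
        push_cast
        field_simp at hNq ⊢
        linarith
      exact ⟨-x - N, by exact_mod_cast hq2⟩
end

section
/- For any integers A₁, …, A_k: all of A₁, …, A_k are perfect squares if and only if there exists an integer x with J_k(A₁, …, A_k, x) = 0, where J_k(x₁,…,x_k, x) = ∏_{ε₁,…,ε_k ∈ {±1}} (x + ε₁√x₁ + ε₂√x₂·X + ⋯ + ε_k√x_k·X^{k−1}) with X = 1 + Σ_{j=1}^k x_j². -/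
open Polynomial IntermediateField Finset

private lemma sqInt_isIntegral {α : ℂ} {A : ℤ} (h : α ^ 2 = A) : IsIntegral ℚ α := by
  refine ⟨X ^ 2 - C (A : ℚ), monic_X_pow_sub_C _ two_ne_zero, ?_⟩
  simp [← aeval_def, h]

private lemma perfectSq_of_rat_sq {q : ℚ} {A : ℤ} (h : q ^ 2 = (A : ℚ)) : ∃ m : ℤ, A = m ^ 2 := by
  have hint : IsIntegral ℤ q := ⟨X ^ 2 - C A, monic_X_pow_sub_C _ two_ne_zero, by
    have : aeval q (X ^ 2 - C A : ℤ[X]) = 0 := by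
      rw [map_sub, aeval_X_pow, aeval_C]
      simp [h]
    simpa [aeval_def] using this⟩
  obtain ⟨m, hm⟩ := IsIntegrallyClosed.isIntegral_iff.mp hint
  refine ⟨m, ?_⟩
  have : ((m : ℚ)) = q := hm
  have : ((m : ℚ))^2 = (A : ℚ) := by rw [this]; exact h
  exact_mod_cast this.symm

private lemma minpoly_sqrt {α : ℂ} {A : ℤ} (h : α ^ 2 = A) (hirr : ∀ q : ℚ, (q : ℂ) ≠ α) :
    minpoly ℚ α = X ^ 2 - C (A : ℚ) := by
  have hmono : (X ^ 2 - C (A : ℚ)).Monic := monic_X_pow_sub_C _ two_ne_zero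
  have haev : aeval α (X ^ 2 - C (A : ℚ)) = 0 := by simp [h]
  have hint : IsIntegral ℚ α := sqInt_isIntegral h
  have hdvd : minpoly ℚ α ∣ X ^ 2 - C (A : ℚ) := minpoly.dvd ℚ α haev
  have hne1 : (minpoly ℚ α).natDegree ≠ 1 := by
    intro hd
    have : (minpoly ℚ α).degree = 1 := by
      rw [degree_eq_natDegree (minpoly.ne_zero hint), hd]; rfl
    obtain ⟨q, hq⟩ := minpoly.degree_eq_one_iff.mp this
    exact hirr q hq
  have hpos : 0 < (minpoly ℚ α).natDegree := minpoly.natDegree_pos hint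
  have h2 : (X ^ 2 - C (A : ℚ)).natDegree ≤ (minpoly ℚ α).natDegree := by
    have hle : (minpoly ℚ α).natDegree ≤ (X ^ 2 - C (A : ℚ)).natDegree :=
      natDegree_le_of_dvd hdvd hmono.ne_zero
    rw [natDegree_X_pow_sub_C] at hle ⊢
    omega
  exact (eq_of_monic_of_dvd_of_natDegree_le (minpoly.monic hint) hmono hdvd h2).symm


private lemma size_zero {k : ℕ} (N : ℤ) (hN : 2 ≤ N) (d : Fin k → ℂ)
    (hd : ∀ j, d j = 0 ∨ (2 ≤ ‖d j‖ ∧ ‖d j‖ ≤ 2 * ((N : ℝ) - 1)))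
    (h : ∑ j, d j * (N : ℂ) ^ (j : ℕ) = 0) : ∀ j, d j = 0 := by
  by_contra hcon
  push_neg at hcon
  obtain ⟨j, hj⟩ := hcon
  set D : Finset (Fin k) := Finset.univ.filter (fun j => d j ≠ 0) with hD
  have hne : D.Nonempty := ⟨j, by simp [hD, hj]⟩
  set j₁ := D.max' hne with hj₁
  have hj₁D : j₁ ∈ D := D.max'_mem hne
  have hj₁ne : d j₁ ≠ 0 := by simpa [hD] using hj₁D
  have hNR : (2 : ℝ) ≤ (N : ℝ) := by exact_mod_cast hN
  have hNpos : (0 : ℝ) < (N : ℝ) := by linarith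
  -- restrict the sum to D
  have hDsum : ∑ j ∈ D, d j * (N : ℂ) ^ (j : ℕ) = 0 := by
    rw [← h]
    refine Finset.sum_subset (Finset.subset_univ D) ?_
    intro x _ hx
    have : d x = 0 := by by_contra hxx; exact hx (by simp [hD, hxx])
    simp [this]
  have hsplit : d j₁ * (N : ℂ) ^ (j₁ : ℕ) = -∑ j ∈ D.erase j₁, d j * (N : ℂ) ^ (j : ℕ) := by
    have := Finset.add_sum_erase D (fun j => d j * (N : ℂ) ^ (j : ℕ)) hj₁D
    rw [hDsum] at this
    linear_combination this
  -- bounds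
  have habsN : ‖(N : ℂ)‖ = (N : ℝ) := by
    rw [Complex.norm_intCast]
    exact abs_of_pos hNpos
  have hlow : 2 * (N : ℝ) ^ (j₁ : ℕ) ≤ ‖d j₁ * (N : ℂ) ^ (j₁ : ℕ)‖ := by
    rw [norm_mul, norm_pow, habsN]
    have h2 : 2 ≤ ‖d j₁‖ := ((hd j₁).resolve_left hj₁ne).1
    have : (0:ℝ) < (N:ℝ) ^ (j₁ : ℕ) := pow_pos hNpos _
    nlinarith [this]
  have hup : ‖∑ j ∈ D.erase j₁, d j * (N : ℂ) ^ (j : ℕ)‖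
      ≤ 2 * ((N : ℝ) ^ (j₁ : ℕ) - 1) := by
    calc ‖∑ j ∈ D.erase j₁, d j * (N : ℂ) ^ (j : ℕ)‖
        ≤ ∑ j ∈ D.erase j₁, ‖d j * (N : ℂ) ^ (j : ℕ)‖ := by
          exact norm_sum_le _ _
      _ ≤ ∑ j ∈ D.erase j₁, 2 * ((N:ℝ) - 1) * (N : ℝ) ^ (j : ℕ) := by
          refine Finset.sum_le_sum ?_
          intro i hi
          have hiD : i ∈ D := Finset.mem_of_mem_erase hi
          have hine : d i ≠ 0 := by simpa [hD] using hiD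
          have hb := ((hd i).resolve_left hine).2
          rw [norm_mul, norm_pow, habsN]
          have hpw : (0:ℝ) ≤ (N:ℝ) ^ (i : ℕ) := (pow_pos hNpos _).le
          exact mul_le_mul_of_nonneg_right hb hpw
      _ = 2 * ((N:ℝ) - 1) * ∑ j ∈ D.erase j₁, (N : ℝ) ^ (j : ℕ) := by
          rw [Finset.mul_sum]
      _ ≤ 2 * ((N:ℝ) - 1) * ∑ i ∈ Finset.range (j₁ : ℕ), (N : ℝ) ^ i := by
          refine mul_le_mul_of_nonneg_left ?_ (by linarith)
          have himg : ∑ i ∈ (D.erase j₁).image Fin.val, (N:ℝ) ^ i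
              = ∑ j ∈ D.erase j₁, (N:ℝ) ^ (j : ℕ) :=
            Finset.sum_image (by intro a _ b _ hab; exact Fin.val_injective hab)
          rw [← himg]
          refine Finset.sum_le_sum_of_subset_of_nonneg ?_ ?_
          · intro i hi
            simp only [Finset.mem_image] at hi
            obtain ⟨a, ha, rfl⟩ := hi
            have h1 : a ≤ j₁ := D.le_max' a (Finset.mem_of_mem_erase ha)
            have h2 : a ≠ j₁ := Finset.ne_of_mem_erase ha
            have : a < j₁ := lt_of_le_of_ne h1 h2
            exact Finset.mem_range.mpr this
          · intro i _ _
            exact (pow_pos hNpos _).le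
      _ = 2 * ((N : ℝ) ^ (j₁ : ℕ) - 1) := by
          have hne1 : (N:ℝ) ≠ 1 := by linarith
          have hg := geom_sum_mul ((N:ℝ)) (j₁ : ℕ)
          linear_combination 2 * hg
  rw [hsplit, norm_neg] at hlow
  have := le_trans hlow hup
  linarith

private lemma exists_flip {k : ℕ} (c : Fin k → ℂ) (A : Fin k → ℤ)
    (hc : ∀ j, c j ^ 2 = A j) (j₀ : Fin k) (hirr : ∀ q : ℚ, (q : ℂ) ≠ c j₀)
    (N x : ℤ) (hsum : ∑ j, c j * (N : ℂ) ^ (j : ℕ) = (x : ℂ)) :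
    ∃ T : Fin k → ℂ, (∀ j, T j = c j ∨ T j = -c j) ∧ T j₀ = -c j₀ ∧
      ∑ j, T j * (N : ℂ) ^ (j : ℕ) = (x : ℂ) := by
  set S : Set ℂ := Set.range c with hS
  have hK : ∀ s ∈ S, IsIntegral ℚ s ∧ ((minpoly ℚ s).map (algebraMap ℚ ℂ)).Splits := by
    rintro s ⟨j, rfl⟩
    exact ⟨sqInt_isIntegral (hc j), IsAlgClosed.splits _⟩
  have hmem : c j₀ ∈ adjoin ℚ S := subset_adjoin ℚ S ⟨j₀, rfl⟩
  have hy : aeval (-(c j₀)) (minpoly ℚ (c j₀)) = 0 := by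
    rw [minpoly_sqrt (hc j₀) hirr]
    simp [hc j₀]
  obtain ⟨σ, hσ⟩ := exists_algHom_adjoin_of_splits_of_aeval hK hmem hy
  set u : Fin k → adjoin ℚ S := fun j => ⟨c j, subset_adjoin ℚ S ⟨j, rfl⟩⟩ with hu
  refine ⟨fun j => σ (u j), ?_, ?_, ?_⟩
  · intro j
    have hsq : (σ (u j)) ^ 2 = (c j) ^ 2 := by
      have h1 : (u j) ^ 2 = ((A j : ℤ) : adjoin ℚ S) := by
        apply Subtype.ext
        push_cast [hu]
        exact hc j
      calc (σ (u j)) ^ 2 = σ ((u j) ^ 2) := (map_pow σ _ _).symm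
        _ = σ ((A j : ℤ) : adjoin ℚ S) := by rw [h1]
        _ = ((A j : ℤ) : ℂ) := map_intCast σ _
        _ = (c j) ^ 2 := (hc j).symm
    have : (σ (u j) - c j) * (σ (u j) + c j) = 0 := by ring_nf; linear_combination hsq
    rcases mul_eq_zero.mp this with h | h
    · exact Or.inl (by linear_combination h)
    · exact Or.inr (by linear_combination h)
  · exact hσ
  · have hLsum : (∑ j, u j * ((N : ℤ) : adjoin ℚ S) ^ (j : ℕ)) = ((x : ℤ) : adjoin ℚ S) := by
      apply Subtype.ext
      push_cast [hu]
      exact hsum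
    have := congrArg σ hLsum
    rw [map_sum, map_intCast] at this
    simpa [map_intCast] using this

theorem all_squares_iff_MRJ_root (k : ℕ) (A : Fin k → ℤ)
    (s : Fin k → ℂ) (hs : ∀ j, s j ^ 2 = (A j : ℂ)) :
    (∀ j, ∃ m : ℤ, A j = m ^ 2) ↔ ∃ x : ℤ, MRJ k A s (x : ℂ) = 0 := by
  set N : ℤ := 1 + ∑ l, (A l) ^ 2 with hNdef
  have hXc : ((1 : ℂ) + ∑ l : Fin k, ((A l : ℂ)) ^ 2) = ((N : ℤ) : ℂ) := by
    push_cast [hNdef]; ring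
  constructor
  · intro h
    choose m hm using h
    have hsm : ∀ j, s j = (m j : ℂ) ∨ s j = -(m j : ℂ) := by
      intro j
      have h1 : s j ^ 2 = ((m j : ℂ)) ^ 2 := by rw [hs j, hm j]; push_cast; ring
      have : (s j - m j) * (s j + m j) = 0 := by linear_combination h1
      rcases mul_eq_zero.mp this with h | h
      · exact Or.inl (by linear_combination h)
      · exact Or.inr (by linear_combination h)
    set t : Fin k → ℤ := fun j => if s j = (m j : ℂ) then m j else -(m j) with ht
    have hts : ∀ j, ((t j : ℤ) : ℂ) = s j := by
      intro j
      rw [ht]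
      beta_reduce
      by_cases hcase : s j = (m j : ℂ)
      · rw [if_pos hcase]; exact hcase.symm
      · rw [if_neg hcase]
        push_cast
        exact ((hsm j).resolve_left hcase).symm
    refine ⟨-∑ j, t j * N ^ (j : ℕ), ?_⟩
    unfold MRJ
    apply Finset.prod_eq_zero (Finset.mem_univ (fun _ => true))
    rw [hXc, Finset.sum_congr rfl (fun j _ =>
      show (if (fun _ : Fin k => true) j then (1:ℂ) else -1) * s j * ((N : ℤ) : ℂ) ^ (j:ℕ)
        = ((t j : ℤ) : ℂ) * ((N : ℤ) : ℂ) ^ (j:ℕ) by rw [if_pos rfl, one_mul, hts j])]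
    push_cast
    ring
  · rintro ⟨x, hx⟩ j₀
    by_contra hns
    unfold MRJ at hx
    obtain ⟨ε, -, hfac⟩ := Finset.prod_eq_zero_iff.mp hx
    set c : Fin k → ℂ := fun j => (if ε j then (1 : ℂ) else -1) * s j with hcdef
    have hc : ∀ j, c j ^ 2 = (A j : ℂ) := by
      intro j
      have h1 : c j ^ 2 = s j ^ 2 := by
        rw [hcdef]
        beta_reduce
        by_cases hj : ε j = true
        · rw [if_pos hj]; ring
        · rw [if_neg hj]; ring
      rw [h1, hs j]
    rw [hXc] at hfac
    have hsum : ∑ j, c j * ((N : ℤ) : ℂ) ^ (j : ℕ) = ((-x : ℤ) : ℂ) := by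
      push_cast
      rw [hcdef]
      linear_combination hfac
    have hA0 : A j₀ ≠ 0 := fun h0 => hns ⟨0, by simp [h0]⟩
    have hirr : ∀ q : ℚ, (q : ℂ) ≠ c j₀ := by
      intro q hq
      apply hns
      apply perfectSq_of_rat_sq (q := q)
      have : ((q : ℂ)) ^ 2 = ((A j₀ : ℚ) : ℂ) := by
        rw [hq, hc j₀]; push_cast; ring
      exact_mod_cast this
    obtain ⟨T, hT1, hT2, hT3⟩ := exists_flip c A hc j₀ hirr N (-x) hsum
    have hN2 : 2 ≤ N := by
      have h1 : A j₀ ^ 2 ≤ ∑ l, (A l) ^ 2 :=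
        Finset.single_le_sum (fun l _ => sq_nonneg (A l)) (Finset.mem_univ j₀)
      have h2 : 1 ≤ A j₀ ^ 2 := by nlinarith [Int.one_le_abs hA0, sq_abs (A j₀)]
      linarith
    set d : Fin k → ℂ := fun j => c j - T j with hd
    have hdsum : ∑ j, d j * ((N : ℤ) : ℂ) ^ (j : ℕ) = 0 := by
      rw [hd]
      simp only [sub_mul]
      rw [Finset.sum_sub_distrib, hsum, hT3]
      ring
    have hdbound : ∀ j, d j = 0 ∨
        (2 ≤ ‖d j‖ ∧ ‖d j‖ ≤ 2 * ((N : ℝ) - 1)) := by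
      intro j
      rcases hT1 j with h | h
      · exact Or.inl (by rw [hd]; simp [h])
      · by_cases hc0 : c j = 0
        · exact Or.inl (by rw [hd]; simp [h, hc0])
        · right
          have hdj : d j = 2 * c j := by rw [hd]; simp [h]; ring
          have hAj : A j ≠ 0 := by
            intro h0
            apply hc0
            have := hc j
            rw [h0] at this
            simpa [pow_eq_zero_iff] using this
          set a : ℝ := ‖c j‖ with ha
          have hasq : a ^ 2 = |(A j : ℝ)| := by
            rw [ha, ← norm_pow, hc j, Complex.norm_intCast]
          have ha1 : 1 ≤ |(A j : ℝ)| := by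
            have : (1 : ℤ) ≤ |A j| := Int.one_le_abs hAj
            calc (1:ℝ) ≤ ((|A j| : ℤ) : ℝ) := by exact_mod_cast this
              _ = |(A j : ℝ)| := by push_cast; rfl
          have haN : |(A j : ℝ)| ≤ (N : ℝ) - 1 := by
            have h1 : |A j| ≤ A j ^ 2 := by nlinarith [Int.one_le_abs hAj, sq_abs (A j)]
            have h2 : A j ^ 2 ≤ ∑ l, (A l) ^ 2 :=
              Finset.single_le_sum (fun l _ => sq_nonneg (A l)) (Finset.mem_univ j)
            have : |A j| ≤ N - 1 := by omega
            calc |(A j : ℝ)| = ((|A j| : ℤ) : ℝ) := by push_cast; rfl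
              _ ≤ ((N - 1 : ℤ) : ℝ) := by exact_mod_cast this
              _ = (N : ℝ) - 1 := by push_cast; ring
          have ha0 : 0 ≤ a := norm_nonneg _
          have ha1' : 1 ≤ a := by nlinarith
          have haN' : a ≤ (N : ℝ) - 1 := by nlinarith
          have habs : ‖d j‖ = 2 * a := by
            rw [hdj, norm_mul, ha]
            norm_num
          constructor <;> rw [habs] <;> linarith
    have := size_zero N hN2 d hdbound hdsum j₀
    rw [hd] at this
    simp only [hT2] at this
    have hcj : c j₀ = 0 := by
      have h2 : (2 : ℂ) * c j₀ = 0 := by linear_combination this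
      simpa using h2
    apply hA0
    have h3 : ((A j₀ : ℂ)) = 0 := by rw [← hc j₀, hcj]; ring
    exact_mod_cast h3
end

section
/- Let C₁, …, Cₙ, D₁, …, Dₙ be integers with Dᵢ ≥ 0 and |Cᵢ| ≤ Dᵢ for each i. Then (C₁ ≥ 0 ∨ ⋯ ∨ Cₙ ≥ 0) if and only if for all integers x₁ ∈ [0, D₁], …, xₙ ∈ [0, Dₙ] there exist integers y, z with (x₁ + C₁ + 1)² + ⋯ + (xₙ + Cₙ + 1)² = (2y+1)(3z+1). -/
lemma pow_rep : ∀ k : ℕ, ∃ z : ℤ, 3*z+1 = 2^k ∨ 3*z+1 = -2^k := by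
  intro k
  induction k with
  | zero => exact ⟨0, Or.inl rfl⟩
  | succ k ih =>
    obtain ⟨z, hz | hz⟩ := ih
    · exact ⟨-2*z-1, Or.inr (by rw [pow_succ]; linarith)⟩
    · exact ⟨-2*z-1, Or.inl (by rw [pow_succ]; linarith)⟩

lemma odd_mul_pow (t : ℤ) (ht : Odd t) (k : ℕ) :
    ∃ y z : ℤ, t * 2^k = (2*y+1)*(3*z+1) := by
  obtain ⟨z, hz | hz⟩ := pow_rep k
  · obtain ⟨y, hy⟩ := ht
    exact ⟨y, z, by rw [hz, hy]⟩
  · obtain ⟨y, hy⟩ := ht.neg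
    exact ⟨y, z, by rw [hz]; linear_combination (-(2:ℤ)^k) * hy⟩

lemma rep_of_ne_zero (m : ℤ) (hm : m ≠ 0) : ∃ y z : ℤ, m = (2*y+1)*(3*z+1) := by
  obtain ⟨k, s, hs, h⟩ := Nat.exists_eq_two_pow_mul_odd (Int.natAbs_ne_zero.mpr hm)
  rcases Int.natAbs_eq m with he | he
  · have : m = (s : ℤ) * 2^k := by rw [he, h]; push_cast; ring
    rw [this]
    exact odd_mul_pow _ (by exact_mod_cast hs.natCast (R := ℤ)) k
  · have : m = (-(s : ℤ)) * 2^k := by rw [he, h]; push_cast; ring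
    rw [this]
    exact odd_mul_pow _ ((hs.natCast (R := ℤ)).neg) k

theorem exists_nonneg_iff_bounded_forall (n : ℕ) (C D : Fin n → ℤ)
    (hD : ∀ i, 0 ≤ D i) (hCD : ∀ i, |C i| ≤ D i) :
    (∃ i, 0 ≤ C i) ↔
      ∀ x : Fin n → ℤ, (∀ i, 0 ≤ x i ∧ x i ≤ D i) →
        ∃ y z : ℤ, ∑ i, (x i + C i + 1) ^ 2 = (2*y + 1) * (3*z + 1) := by
  constructor
  · rintro ⟨i, hi⟩ x hx
    apply rep_of_ne_zero
    have hpos : 0 < ∑ j, (x j + C j + 1) ^ 2 := by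
      apply Finset.sum_pos' (fun j _ => sq_nonneg _) ⟨i, Finset.mem_univ i, ?_⟩
      have := (hx i).1
      positivity
    exact hpos.ne'
  · intro h
    by_contra hc
    push_neg at hc
    set x : Fin n → ℤ := fun i => -C i - 1 with hxdef
    obtain ⟨y, z, hyz⟩ := h x (fun i => by
      have h1 := hc i
      have h2 := hCD i
      have := abs_le.mp h2
      constructor <;> simp [hxdef] <;> omega)
    have hsum : ∑ i, (x i + C i + 1) ^ 2 = 0 := by
      apply Finset.sum_eq_zero
      intro i _
      simp only [hxdef]
      ring
    rw [hsum] at hyz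
    have h1 : (2*y+1) ≠ 0 := by omega
    have h2 : (3*z+1) ≠ 0 := by omega
    exact (mul_ne_zero h1 h2) hyz.symm
end

section
/- Let C₁, …, Cₙ be integers. Then C₁ ≥ 0 ∧ ⋯ ∧ Cₙ ≥ 0 if and only if for every nonzero integer x and every integer y, ∏_{i=1}^n ((4Cᵢ+2)x² + y² − 1) ≠ 0. -/
theorem all_nonneg_iff_product_ne_zero (n : ℕ) (C : Fin n → ℤ) :
    (∀ i, 0 ≤ C i) ↔
      ∀ x : ℤ, x ≠ 0 → ∀ y : ℤ,
        (∏ i, ((4 * C i + 2) * x ^ 2 + y ^ 2 - 1)) ≠ 0 := by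
  constructor
  · intro h x hx y
    apply Finset.prod_ne_zero_iff.mpr
    intro i _
    have hC := h i
    have hx2 : 1 ≤ x ^ 2 := by
      rcases hx.lt_or_gt with h' | h' <;> nlinarith
    nlinarith [sq_nonneg y]
  · intro h i
    by_contra hC
    push_neg at hC
    set d : ℤ := -(4 * C i + 2) with hd
    have hd0 : 0 < d := by omega
    have hns : ¬IsSquare d := by
      rintro ⟨r, hr⟩
      have h4 : d % 4 = 2 := by omega
      rw [hr] at h4
      rcases Int.even_or_odd r with ⟨k, hk⟩ | ⟨k, hk⟩ <;> subst hk
      · rw [show (k + k) * (k + k) = (k * k) * 4 + 0 by ring] at h4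
        generalize k * k = m at h4
        omega
      · rw [show (2 * k + 1) * (2 * k + 1) = (k * k + k) * 4 + 1 by ring] at h4
        generalize k * k + k = m at h4
        omega
    obtain ⟨a, b, hab, hb⟩ := Pell.exists_of_not_isSquare hd0 hns
    apply h b hb a
    apply Finset.prod_eq_zero (Finset.mem_univ i)
    nlinarith [hab]
end

section
/- Let b₀ ≥ 2 be an even integer, n ≥ 1 an integer, and c an integer with b₀² + 4 dividing c and 0 < c < (b₀² + 4)ⁿ. Set k = 4n, q = (b₀^k + c)/4 (an integer), and m = 4q − 1. Then |m − b₀^k| < |m − (b₀+1)^k| and |m − b₀^k| < |m − (b₀−1)^k|; moreover, for any integer b, if |m − b^k| = min over x ∈ ℤ of |m − x^k|, then |b| = |b₀| and 4q − b^k = c. -/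
private lemma aux_binom : ∀ (k : ℕ) (x : ℤ), 0 ≤ x →
    x ^ (k + 1) + (k + 1) * x ^ k ≤ (x + 1) ^ (k + 1) := by
  intro k
  induction k with
  | zero => intro x hx; simp
  | succ k ih =>
    intro x hx
    have h := ih x hx
    have hx1 : (0:ℤ) ≤ x + 1 := by linarith
    have key := mul_le_mul_of_nonneg_right h hx1
    have e1 : (x + 1) ^ (k + 1) * (x + 1) = (x + 1) ^ (k + 2) := by ring
    have e2 : (x ^ (k + 1) + (k + 1) * x ^ k) * (x + 1)
        = x ^ (k + 2) + ((k:ℤ) + 2) * x ^ (k + 1) + (k + 1) * x ^ k := by ring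
    have hpk : (0:ℤ) ≤ x ^ k := pow_nonneg hx k
    have hk1 : (0:ℤ) ≤ (k:ℤ) + 1 := by positivity
    push_cast
    nlinarith [mul_nonneg hk1 hpk]

theorem nearest_power_recovers_c (b₀ : ℤ) (n : ℕ) (c q : ℤ)
    (hb₀ : 2 ≤ b₀) (hb₀e : Even b₀) (hn : 1 ≤ n)
    (hdvd : (b₀ ^ 2 + 4) ∣ c) (hc0 : 0 < c) (hc1 : c < (b₀ ^ 2 + 4) ^ n)
    (hq : 4 * q = b₀ ^ (4 * n) + c) :
    |4 * q - 1 - b₀ ^ (4 * n)| < |4 * q - 1 - (b₀ + 1) ^ (4 * n)| ∧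
    |4 * q - 1 - b₀ ^ (4 * n)| < |4 * q - 1 - (b₀ - 1) ^ (4 * n)| ∧
    ∀ b : ℤ, (∀ x : ℤ, |4 * q - 1 - b ^ (4 * n)| ≤ |4 * q - 1 - x ^ (4 * n)|) →
      (|b| = |b₀| ∧ 4 * q - b ^ (4 * n) = c) := by
  obtain ⟨j, rfl⟩ : ∃ j, n = j + 1 := ⟨n - 1, by omega⟩
  have hK : 4 * (j + 1) = 4 * j + 4 := by ring
  rw [hK] at hq ⊢
  set K := 4 * j + 4 with hKdef
  have hb0 : (0:ℤ) ≤ b₀ := by linarith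
  have hb1 : (1:ℤ) ≤ b₀ := by linarith
  -- the key bound : 2*(c-1) < (b₀+1)^K - b₀^K
  have hbinom := aux_binom (4 * j + 3) b₀ hb0
  have hbe : (4 * j + 3) + 1 = K := by omega
  rw [hbe] at hbinom
  -- 2*(b₀²+4)^(j+1) ≤ 4 * b₀^(3j+2)
  have h1 : (b₀ ^ 2 + 4) ^ (j + 1) ≤ (2 * b₀ ^ 2) ^ (j + 1) := by
    apply pow_le_pow_left₀ (by positivity)
    nlinarith
  have h2 : (2:ℤ) ^ j ≤ b₀ ^ j := pow_le_pow_left₀ (by norm_num) hb₀ j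
  have h3 : (2 * b₀ ^ 2) ^ (j + 1) = 2 * 2 ^ j * (b₀ ^ 2) ^ (j + 1) := by
    rw [mul_pow]; ring
  have hb2p : (0:ℤ) < (b₀ ^ 2) ^ (j + 1) := by positivity
  have h4 : 2 * (b₀ ^ 2 + 4) ^ (j + 1) ≤ 4 * b₀ ^ (3 * j + 2) := by
    have e : b₀ ^ j * (b₀ ^ 2) ^ (j + 1) = b₀ ^ (3 * j + 2) := by
      rw [← pow_mul, ← pow_add]; ring_nf
    calc 2 * (b₀ ^ 2 + 4) ^ (j + 1) ≤ 2 * (2 * b₀ ^ 2) ^ (j + 1) := by linarith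
      _ = 4 * (2 ^ j * (b₀ ^ 2) ^ (j + 1)) := by rw [h3]; ring
      _ ≤ 4 * (b₀ ^ j * (b₀ ^ 2) ^ (j + 1)) := by
          have := mul_le_mul_of_nonneg_right h2 (le_of_lt hb2p)
          linarith
      _ = 4 * b₀ ^ (3 * j + 2) := by rw [e]
  have h5 : b₀ ^ (3 * j + 2) ≤ b₀ ^ (4 * j + 3) := pow_le_pow_right₀ hb1 (by omega)
  have h6 : (4:ℤ) * b₀ ^ (4 * j + 3) ≤ ((4 * j + 3 : ℕ) + 1 : ℤ) * b₀ ^ (4 * j + 3) := by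
    have : (0:ℤ) ≤ b₀ ^ (4 * j + 3) := by positivity
    have h7 : (4:ℤ) ≤ ((4 * j + 3 : ℕ) + 1 : ℤ) := by push_cast; omega
    exact mul_le_mul_of_nonneg_right h7 this
  have hKey : 2 * (c - 1) < (b₀ + 1) ^ K - b₀ ^ K := by
    have hc1' : c ≤ (b₀ ^ 2 + 4) ^ (j + 1) - 1 := by omega
    push_cast at hbinom h6
    nlinarith
  -- monotone facts
  have hmono : (b₀ - 1) ^ K < b₀ ^ K :=
    pow_lt_pow_left₀ (by linarith) (by linarith) (by omega)
  have hcm : (0:ℤ) ≤ c - 1 := by omega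
  have h1e : 4 * q - 1 - b₀ ^ K = c - 1 := by linarith
  have hposD : (0:ℤ) < (b₀ + 1) ^ K - b₀ ^ K := by linarith
  refine ⟨?_, ?_, ?_⟩
  · rw [h1e, abs_of_nonneg hcm, abs_of_nonpos (by linarith)]
    linarith
  · rw [h1e, abs_of_nonneg hcm, abs_of_nonneg (by linarith)]
    linarith
  · intro b hb
    have hEv : Even K := ⟨2 * j + 2, by omega⟩
    have hbK : b ^ K = |b| ^ K := by
      rw [pow_abs, abs_of_nonneg (hEv.pow_nonneg b)]
    have hmin := hb b₀
    rw [h1e, abs_of_nonneg hcm] at hmin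
    have habs : |b| = b₀ := by
      by_contra hne
      rcases lt_or_gt_of_ne hne with hlt | hgt
      · -- |b| ≤ b₀ - 1
        have : |b| ^ K ≤ (b₀ - 1) ^ K :=
          pow_le_pow_left₀ (abs_nonneg b) (by omega) K
        have hge : c - 1 < 4 * q - 1 - b ^ K := by rw [hbK]; linarith
        have := le_abs_self (4 * q - 1 - b ^ K)
        linarith
      · -- |b| ≥ b₀ + 1
        have : (b₀ + 1) ^ K ≤ |b| ^ K :=
          pow_le_pow_left₀ (by linarith) (by omega) K
        have hge : c - 1 < b ^ K - (4 * q - 1) := by rw [hbK]; linarith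
        have := neg_le_abs (4 * q - 1 - b ^ K)
        linarith
    constructor
    · rw [habs, abs_of_nonneg hb0]
    · rw [hbK, habs]; linarith
end
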